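/- Let G be a bi-orderable group and let g ∈ G be a nonidentity element. Then the isolator I(g) is a relatively convex subgroup of G: there exists a positive cone P of G such that I(g) is a subgroup of G and is convex with respect to the left order determined by P. -/

import Mathlib

/-- `P` is the positive cone of a left-invariant strict total order on `G`. -/
def IsPositiveCone {G : Type*} [Group G] (P : Set G) : Prop :=
  (∀ a ∈ P, ∀ b ∈ P, a * b ∈ P) ∧
  (∀ g : G, g ∈ P ∨ g⁻¹ ∈ P ∨ g = 1) ∧
  (∀ g ∈ P, g⁻¹ ∉ P) ∧
  (1 : G) ∉ P

/-- `G` is bi-orderable: it admits a positive cone invariant under conjugation. -/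
def IsBiOrderable (G : Type*) [Group G] : Prop :=
  ∃ P : Set G, IsPositiveCone P ∧ ∀ g : G, ∀ p ∈ P, g * p * g⁻¹ ∈ P

/-- The isolator of the cyclic subgroup generated by `g`. -/
def Isolator {G : Type*} [Group G] (g : G) : Set G :=
  {h : G | ∃ k : ℤ, k ≠ 0 ∧ h ^ k ∈ Subgroup.zpowers g}

/-- `S` is convex with respect to the left order determined by the positive cone `P`
(where `x < y` iff `x⁻¹ * y ∈ P`). -/
def IsConvex {G : Type*} [Group G] (P S : Set G) : Prop :=
  ∀ a ∈ S, ∀ b ∈ S, ∀ f : G, a⁻¹ * f ∈ P → f⁻¹ * b ∈ P → f ∈ S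

namespace IsoConv

structure Cone (G : Type*) [Group G] : Type _ where
  P : Set G
  mul_mem : ∀ a ∈ P, ∀ b ∈ P, a * b ∈ P
  total : ∀ x : G, x ∈ P ∨ x⁻¹ ∈ P ∨ x = 1
  inv_not : ∀ x ∈ P, x⁻¹ ∉ P
  one_not : (1 : G) ∉ P
  conj : ∀ x : G, ∀ p ∈ P, x * p * x⁻¹ ∈ P

variable {G : Type*} [Group G]

namespace Cone

variable (c : Cone G)

/-- strict order -/
def lt (a b : G) : Prop := a⁻¹ * b ∈ c.P

def le (a b : G) : Prop := a = b ∨ c.lt a b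

variable {c}

lemma lt_def {a b : G} : c.lt a b ↔ a⁻¹ * b ∈ c.P := Iff.rfl

lemma one_lt_iff {x : G} : c.lt 1 x ↔ x ∈ c.P := by simp [lt]

lemma lt_one_iff {x : G} : c.lt x 1 ↔ x⁻¹ ∈ c.P := by simp [lt]

lemma lt_irrefl (a : G) : ¬ c.lt a a := by simp [lt, c.one_not]

lemma lt_mul_left {a b : G} (h : c.lt a b) (x : G) : c.lt (x * a) (x * b) := by
  simpa [lt, mul_assoc] using h

lemma lt_mul_right {a b : G} (h : c.lt a b) (x : G) : c.lt (a * x) (b * x) := by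
  have := c.conj x⁻¹ _ h
  simpa [lt, mul_assoc] using this

lemma lt_trans {a b d : G} (h1 : c.lt a b) (h2 : c.lt b d) : c.lt a d := by
  have := c.mul_mem _ h1 _ h2
  simpa [lt, mul_assoc] using this

lemma lt_asymm {a b : G} (h : c.lt a b) : ¬ c.lt b a := by
  intro h'
  exact c.one_not (by simpa [lt, mul_assoc] using c.mul_mem _ h _ h')

lemma lt_total {a b : G} (h : a ≠ b) : c.lt a b ∨ c.lt b a := by
  rcases c.total (a⁻¹ * b) with h1 | h1 | h1
  · exact Or.inl h1
  · right; simpa [lt, mul_inv_rev] using h1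
  · exact absurd (by simpa [eq_comm, inv_mul_eq_one] using h1) (Ne.symm h)

lemma lt_ne {a b : G} (h : c.lt a b) : a ≠ b := by
  rintro rfl; exact lt_irrefl a h

lemma inv_lt_inv {a b : G} (h : c.lt a b) : c.lt b⁻¹ a⁻¹ := by
  have := lt_mul_right (lt_mul_left h a⁻¹) b⁻¹
  simpa using this

lemma lt_conj {a b : G} (h : c.lt a b) (x : G) : c.lt (x * a * x⁻¹) (x * b * x⁻¹) :=
  lt_mul_right (lt_mul_left h x) x⁻¹

-- le lemmas
lemma le_refl (a : G) : c.le a a := Or.inl rfl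

lemma le_of_lt {a b : G} (h : c.lt a b) : c.le a b := Or.inr h

lemma le_total' (a b : G) : c.le a b ∨ c.le b a := by
  by_cases h : a = b
  · exact Or.inl (Or.inl h)
  · rcases lt_total h with h | h
    · exact Or.inl (Or.inr h)
    · exact Or.inr (Or.inr h)

lemma lt_of_le_of_lt {a b d : G} (h1 : c.le a b) (h2 : c.lt b d) : c.lt a d := by
  rcases h1 with rfl | h1
  · exact h2
  · exact lt_trans h1 h2

lemma lt_of_lt_of_le {a b d : G} (h1 : c.lt a b) (h2 : c.le b d) : c.lt a d := by
  rcases h2 with rfl | h2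
  · exact h1
  · exact lt_trans h1 h2

lemma le_trans' {a b d : G} (h1 : c.le a b) (h2 : c.le b d) : c.le a d := by
  rcases h1 with rfl | h1
  · exact h2
  · exact le_of_lt (lt_of_lt_of_le h1 h2)

lemma le_mul_left {a b : G} (h : c.le a b) (x : G) : c.le (x * a) (x * b) := by
  rcases h with rfl | h
  · exact le_refl _
  · exact le_of_lt (lt_mul_left h x)

lemma le_mul_right {a b : G} (h : c.le a b) (x : G) : c.le (a * x) (b * x) := by
  rcases h with rfl | h
  · exact le_refl _
  · exact le_of_lt (lt_mul_right h x)

lemma le_mul_le {a b x y : G} (h1 : c.le a b) (h2 : c.le x y) : c.le (a * x) (b * y) :=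
  le_trans' (le_mul_right h1 x) (le_mul_left h2 b)

lemma lt_mul_lt {a b x y : G} (h1 : c.lt a b) (h2 : c.lt x y) : c.lt (a * x) (b * y) :=
  lt_trans (lt_mul_right h1 x) (lt_mul_left h2 b)

lemma lt_mul_le {a b x y : G} (h1 : c.lt a b) (h2 : c.le x y) : c.lt (a * x) (b * y) :=
  lt_of_lt_of_le (lt_mul_right h1 x) (le_mul_left h2 b)

lemma le_mul_lt {a b x y : G} (h1 : c.le a b) (h2 : c.lt x y) : c.lt (a * x) (b * y) :=
  lt_of_le_of_lt (le_mul_right h1 x) (lt_mul_left h2 b)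

lemma not_lt_iff_le {a b : G} : ¬ c.lt a b ↔ c.le b a := by
  constructor
  · intro h
    by_cases hab : a = b
    · exact Or.inl hab.symm
    · rcases lt_total hab with h1 | h1
      · exact absurd h1 h
      · exact Or.inr h1
  · rintro (rfl | h1) h
    · exact lt_irrefl _ h
    · exact lt_asymm h1 h

lemma le_antisymm' {a b : G} (h1 : c.le a b) (h2 : c.le b a) : a = b := by
  rcases h1 with rfl | h1
  · rfl
  · rcases h2 with rfl | h2
    · rfl
    · exact absurd h2 (lt_asymm h1)

-- powers (ℕ)
lemma pow_lt_pow {a b : G} (h : c.lt a b) : ∀ n : ℕ, 0 < n → c.lt (a ^ n) (b ^ n) := by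
  intro n hn
  induction n with
  | zero => omega
  | succ m ih =>
    rcases Nat.eq_zero_or_pos m with rfl | hm
    · simpa using h
    · have := lt_mul_lt (ih hm) h
      simpa [pow_succ] using this

lemma pow_le_pow {a b : G} (h : c.le a b) (n : ℕ) : c.le (a ^ n) (b ^ n) := by
  induction n with
  | zero => simp [le_refl]
  | succ m ih =>
    have := le_mul_le ih h
    simpa [pow_succ] using this

lemma one_le_pow {a : G} (h : c.le 1 a) (n : ℕ) : c.le 1 (a ^ n) := by
  simpa using pow_le_pow h n

lemma pow_le_one {a : G} (h : c.le a 1) (n : ℕ) : c.le (a ^ n) 1 := by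
  simpa using pow_le_pow h n

lemma lt_of_pow_lt {a b : G} {n : ℕ} (hn : 0 < n) (h : c.lt (a ^ n) (b ^ n)) : c.lt a b := by
  by_cases hab : a = b
  · subst hab; exact absurd h (lt_irrefl _)
  · rcases lt_total hab with h1 | h1
    · exact h1
    · exact absurd (pow_lt_pow h1 n hn) (lt_asymm h)

lemma pow_left_injective (c : Cone G) {a b : G} {n : ℕ} (hn : 0 < n) (h : a ^ n = b ^ n) : a = b := by
  by_contra hab
  rcases lt_total (c := c) hab with h1 | h1
  · exact lt_irrefl _ (h ▸ pow_lt_pow h1 n hn)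
  · exact lt_irrefl _ (h ▸ pow_lt_pow h1 n hn)

end Cone

section Main

variable (c : Cone G) (g : G)

/-- elements commuting with `g` (the centralizer). -/
def ZS : Set G := {x | Commute g x}

/-- `g`-infinitesimal elements of the centralizer. -/
def DS : Set G := {x | Commute g x ∧ ∀ n : ℤ, c.lt (x ^ n) g}

/-- `g`-bounded elements of the centralizer. -/
def BS : Set G := {x | Commute g x ∧ ∃ N : ℕ, c.lt x (g ^ (N : ℤ)) ∧ c.lt (g ^ (-(N : ℤ))) x}

/-- elements with a power in `⟨g⟩·D`. -/
def TS : Set G := {x | x ∈ BS c g ∧ ∃ k : ℕ, 0 < k ∧ ∃ m : ℤ, x ^ k * (g ^ m)⁻¹ ∈ DS c g}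

variable {c g}

lemma one_lt_pow_nat (hg : c.lt 1 g) {n : ℕ} (hn : 0 < n) : c.lt 1 (g ^ n) := by
  simpa using Cone.pow_lt_pow hg n hn

lemma one_lt_zpow (hg : c.lt 1 g) {m : ℤ} (hm : 0 < m) : c.lt 1 (g ^ m) := by
  have : g ^ m = g ^ m.toNat := by rw [← zpow_natCast]; congr 1; omega
  rw [this]
  exact one_lt_pow_nat hg (by omega)

lemma zpow_lt_zpow (hg : c.lt 1 g) {a b : ℤ} (h : a < b) : c.lt (g ^ a) (g ^ b) := by
  have : g ^ b = g ^ a * g ^ (b - a) := by rw [← zpow_add]; congr 1; omega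
  rw [this]
  have h1 : c.lt 1 (g ^ (b - a)) := one_lt_zpow hg (by omega)
  simpa using Cone.lt_mul_left h1 (g ^ a)

lemma zpow_lt_iff (hg : c.lt 1 g) {a b : ℤ} : c.lt (g ^ a) (g ^ b) ↔ a < b := by
  constructor
  · intro h
    by_contra hab
    rcases eq_or_lt_of_le (le_of_not_gt hab) with h1 | h1
    · rw [h1] at h; exact Cone.lt_irrefl _ h
    · exact Cone.lt_asymm (zpow_lt_zpow hg h1) h
  · exact zpow_lt_zpow hg

lemma zpow_inj (hg : c.lt 1 g) {a b : ℤ} (h : g ^ a = g ^ b) : a = b := by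
  by_contra hne
  rcases lt_or_gt_of_ne hne with h1 | h1
  · exact Cone.lt_irrefl _ (h ▸ zpow_lt_zpow hg h1)
  · exact Cone.lt_irrefl _ (h ▸ zpow_lt_zpow hg h1)

lemma zpow_le_zpow (hg : c.lt 1 g) {a b : ℤ} (h : a ≤ b) : c.le (g ^ a) (g ^ b) := by
  rcases eq_or_lt_of_le h with rfl | h1
  · exact Cone.le_refl _
  · exact Cone.le_of_lt (zpow_lt_zpow hg h1)

/-! ### Isolator basics -/

lemma mem_isolator_iff_nat {x : G} :
    x ∈ Isolator g ↔ ∃ k : ℕ, 0 < k ∧ ∃ m : ℤ, x ^ k = g ^ m := by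
  constructor
  · rintro ⟨k, hk, hmem⟩
    rw [Subgroup.mem_zpowers_iff] at hmem
    obtain ⟨m, hm⟩ := hmem
    rcases lt_or_gt_of_ne hk with hneg | hpos
    · refine ⟨(-k).toNat, by omega, -m, ?_⟩
      have h1 : x ^ (-k) = g ^ (-m) := by rw [zpow_neg, zpow_neg, hm.symm]
      rw [← h1, ← zpow_natCast]
      congr 1
      omega
    · refine ⟨k.toNat, by omega, m, ?_⟩
      rw [← hm.symm, ← zpow_natCast]
      congr 1
      omega
  · rintro ⟨k, hk, m, hm⟩
    exact ⟨(k : ℤ), by exact_mod_cast hk.ne', by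
      rw [Subgroup.mem_zpowers_iff]
      exact ⟨m, by rw [← hm, zpow_natCast]⟩⟩

lemma one_mem_isolator : (1 : G) ∈ Isolator g :=
  mem_isolator_iff_nat.2 ⟨1, one_pos, 0, by simp⟩

lemma conj_pow_eq (z x : G) (k : ℕ) : (z * x * z⁻¹) ^ k = z * x ^ k * z⁻¹ := by
  simpa [MulAut.conj_apply] using (map_pow (MulAut.conj z) x k)

lemma conj_zpow_eq (z x : G) (k : ℤ) : (z * x * z⁻¹) ^ k = z * x ^ k * z⁻¹ := by
  simpa [MulAut.conj_apply] using (map_zpow (MulAut.conj z) x k)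

lemma commute_g_of_mem_isolator (c : Cone G) {x : G} (hx : x ∈ Isolator g) : Commute g x := by
  obtain ⟨k, hk, m, hm⟩ := mem_isolator_iff_nat.1 hx
  have h1 : (g * x * g⁻¹) ^ k = x ^ k := by
    rw [conj_pow_eq, hm]
    group
  have h2 : g * x * g⁻¹ = x := Cone.pow_left_injective c hk h1
  have : g * x = x * g := by
    calc g * x = (g * x * g⁻¹) * g := by group
    _ = x * g := by rw [h2]
  exact this

lemma commute_of_mem_isolator (c : Cone G) {x y : G} (hx : x ∈ Isolator g)
    (hy : y ∈ Isolator g) : Commute x y := by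
  obtain ⟨k, hk, m, hm⟩ := mem_isolator_iff_nat.1 hx
  have hyg : Commute g y := commute_g_of_mem_isolator c hy
  have hygm : Commute (x ^ k) y := by
    rw [hm]; exact hyg.zpow_left m
  have h1 : (y * x * y⁻¹) ^ k = x ^ k := by
    rw [conj_pow_eq]
    rw [← hygm.eq]
    group
  have h2 : y * x * y⁻¹ = x := Cone.pow_left_injective c hk h1
  have : x * y = y * x := by
    calc x * y = (y * x * y⁻¹) * y := by rw [h2]
    _ = y * x := by group
  exact this

lemma isolator_mul_mem (c : Cone G) {x y : G} (hx : x ∈ Isolator g)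
    (hy : y ∈ Isolator g) : x * y ∈ Isolator g := by
  obtain ⟨k, hk, m, hm⟩ := mem_isolator_iff_nat.1 hx
  obtain ⟨k', hk', m', hm'⟩ := mem_isolator_iff_nat.1 hy
  have hc : Commute x y := commute_of_mem_isolator c hx hy
  refine mem_isolator_iff_nat.2 ⟨k * k', by positivity, m * k' + m' * k, ?_⟩
  rw [hc.mul_pow]
  have h1 : x ^ (k * k') = g ^ (m * k') := by
    rw [pow_mul, hm, ← zpow_natCast (g^m) k', ← zpow_mul]
  have h2 : y ^ (k * k') = g ^ (m' * k) := by
    rw [mul_comm k k', pow_mul, hm', ← zpow_natCast (g^m') k, ← zpow_mul]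
  rw [h1, h2, ← zpow_add]

lemma isolator_inv_mem {x : G} (hx : x ∈ Isolator g) : x⁻¹ ∈ Isolator g := by
  obtain ⟨k, hk, m, hm⟩ := mem_isolator_iff_nat.1 hx
  refine mem_isolator_iff_nat.2 ⟨k, hk, -m, ?_⟩
  rw [inv_pow, hm, zpow_neg]

lemma isolator_of_pow_mem {x : G} {n : ℕ} (hn : 0 < n) (hx : x ^ n ∈ Isolator g) :
    x ∈ Isolator g := by
  obtain ⟨k, hk, m, hm⟩ := mem_isolator_iff_nat.1 hx
  exact mem_isolator_iff_nat.2 ⟨n * k, by positivity, m, by rw [pow_mul]; exact hm⟩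

lemma isolator_inv_eq : Isolator g⁻¹ = Isolator g := by
  ext x
  constructor <;> intro hx <;>
  · obtain ⟨k, hk, hmem⟩ := hx
    rw [Subgroup.mem_zpowers_iff] at hmem
    obtain ⟨m, hm⟩ := hmem
    refine ⟨k, hk, ?_⟩
    rw [Subgroup.mem_zpowers_iff]
    exact ⟨-m, by rw [← hm]; simp [zpow_neg]⟩

end Main

section DB

variable {c : Cone G} {g : G}

lemma DS_commute {x : G} (hx : x ∈ DS c g) : Commute g x := hx.1

lemma DS_lt {x : G} (hx : x ∈ DS c g) (n : ℤ) : c.lt (x ^ n) g := hx.2 n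

lemma DS_lt_g {x : G} (hx : x ∈ DS c g) : c.lt x g := by
  simpa using hx.2 1

lemma g_inv_lt_DS {x : G} (hx : x ∈ DS c g) : c.lt g⁻¹ x := by
  have := hx.2 (-1)
  simp only [zpow_neg, zpow_one] at this
  have := Cone.inv_lt_inv this
  simpa using this

lemma one_mem_DS (hg : c.lt 1 g) : (1 : G) ∈ DS c g :=
  ⟨Commute.one_right g, fun n => by simpa using hg⟩

lemma DS_inv_mem {x : G} (hx : x ∈ DS c g) : x⁻¹ ∈ DS c g :=
  ⟨hx.1.inv_right, fun n => by rw [inv_zpow, ← zpow_neg]; exact hx.2 (-n)⟩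

lemma DS_of_nat_pows {x : G} (hc : Commute g x) (h1 : ∀ n : ℕ, c.lt (x ^ n) g)
    (h2 : ∀ n : ℕ, c.lt (x⁻¹ ^ n) g) : x ∈ DS c g := by
  refine ⟨hc, fun n => ?_⟩
  rcases Int.eq_nat_or_neg n with ⟨k, rfl | rfl⟩
  · rw [zpow_natCast]; exact h1 k
  · rw [zpow_neg, zpow_natCast, ← inv_pow]; exact h2 k

lemma le_max2 {x y : G} (hx : x ∈ DS c g) (hy : y ∈ DS c g) :
    ∃ M ∈ DS c g, c.le x M ∧ c.le y M := by
  rcases Cone.le_total' x y with h | h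
  · exact ⟨y, hy, h, Cone.le_refl _⟩
  · exact ⟨x, hx, Cone.le_refl _, h⟩

lemma prod_pow_le {u v M : G} (hu : c.le u M) (hv : c.le v M) :
    ∀ n : ℕ, c.le ((u * v) ^ n) (M ^ (2 * n)) := by
  intro n
  induction n with
  | zero => simp [Cone.le_refl]
  | succ m ih =>
    have h1 : c.le ((u * v) ^ m * (u * v)) (M ^ (2 * m) * (M * M)) :=
      Cone.le_mul_le ih (Cone.le_mul_le hu hv)
    have e1 : (u * v) ^ (m + 1) = (u * v) ^ m * (u * v) := by rw [pow_succ]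
    have e2 : M ^ (2 * (m + 1)) = M ^ (2 * m) * (M * M) := by
      rw [show 2 * (m + 1) = 2 * m + 1 + 1 by ring, pow_succ, pow_succ, mul_assoc]
    rw [e1, e2]
    exact h1

lemma DS_mul_mem {x y : G} (hx : x ∈ DS c g) (hy : y ∈ DS c g) : x * y ∈ DS c g := by
  obtain ⟨M1, hM1, hxM1, hyM1⟩ := le_max2 hx hy
  obtain ⟨M2, hM2, hxM2, hyM2⟩ := le_max2 (DS_inv_mem hx) (DS_inv_mem hy)
  obtain ⟨M, hM, hM1M, hM2M⟩ := le_max2 hM1 hM2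
  have hMbig : ∀ n : ℕ, c.lt (M ^ (2 * n)) g := by
    intro n
    have := hM.2 (((2 * n : ℕ) : ℤ))
    rwa [zpow_natCast] at this
  refine DS_of_nat_pows (hx.1.mul_right hy.1) (fun n => ?_) (fun n => ?_)
  · exact Cone.lt_of_le_of_lt
      (prod_pow_le (Cone.le_trans' hxM1 hM1M) (Cone.le_trans' hyM1 hM1M) n) (hMbig n)
  · rw [mul_inv_rev]
    exact Cone.lt_of_le_of_lt
      (prod_pow_le (Cone.le_trans' hyM2 hM2M) (Cone.le_trans' hxM2 hM2M) n) (hMbig n)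

lemma DS_convex (hg : c.lt 1 g) {a b w : G} (ha : a ∈ DS c g) (hb : b ∈ DS c g)
    (hw : Commute g w) (h1 : c.le a w) (h2 : c.le w b) : w ∈ DS c g := by
  refine DS_of_nat_pows hw (fun n => ?_) (fun n => ?_)
  · rcases Cone.le_total' w 1 with h | h
    · exact Cone.lt_of_le_of_lt (Cone.pow_le_one h n) hg
    · have : c.le (w ^ n) (b ^ n) := Cone.pow_le_pow h2 n
      refine Cone.lt_of_le_of_lt this ?_
      have := hb.2 (n : ℤ)
      rwa [zpow_natCast] at this
  · rcases Cone.le_total' w⁻¹ 1 with h | h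
    · exact Cone.lt_of_le_of_lt (Cone.pow_le_one h n) hg
    · have ha' : c.le w⁻¹ a⁻¹ := by
        rcases h1 with rfl | h1
        · exact Cone.le_refl _
        · exact Cone.le_of_lt (Cone.inv_lt_inv h1)
      have : c.le (w⁻¹ ^ n) (a⁻¹ ^ n) := Cone.pow_le_pow ha' n
      refine Cone.lt_of_le_of_lt this ?_
      have := (DS_inv_mem ha).2 (n : ℤ)
      rwa [zpow_natCast] at this

lemma DS_conj_mem {z d : G} (hz : Commute g z) (hd : d ∈ DS c g) :
    z * d * z⁻¹ ∈ DS c g := by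
  have hcom : Commute g (z * d * z⁻¹) := (hz.mul_right hd.1).mul_right hz.inv_right
  refine ⟨hcom, fun n => ?_⟩
  rw [conj_zpow_eq]
  have h1 : c.lt (z * d ^ n * z⁻¹) (z * g * z⁻¹) :=
    Cone.lt_mul_right (Cone.lt_mul_left (hd.2 n) z) z⁻¹
  rwa [show z * g * z⁻¹ = g by rw [← hz.eq]; group] at h1

lemma g_zpow_mem_DS {m : ℤ} (hg : c.lt 1 g) (h : g ^ m ∈ DS c g) : m = 0 := by
  have h1 := h.2 1
  rw [zpow_one] at h1
  have h2 := h.2 (-1)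
  rw [zpow_neg, zpow_one, ← zpow_neg] at h2
  have e1 : c.lt (g ^ m) (g ^ (1:ℤ)) := by rwa [zpow_one]
  have e2 : c.lt (g ^ (-m)) (g ^ (1:ℤ)) := by rwa [zpow_one]
  have := (zpow_lt_iff hg).1 e1
  have := (zpow_lt_iff hg).1 e2
  omega

/-! ### BS basics -/

lemma BS_commute {x : G} (hx : x ∈ BS c g) : Commute g x := hx.1

lemma one_mem_BS (hg : c.lt 1 g) : (1 : G) ∈ BS c g := by
  refine ⟨Commute.one_right g, 1, ?_, ?_⟩
  · simpa using hg
  · have : c.lt (g ^ (-(1:ℤ))) 1 := by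
      have := Cone.inv_lt_inv hg
      simpa [zpow_neg] using this
    simpa using this

lemma g_mem_BS (hg : c.lt 1 g) : g ∈ BS c g := by
  refine ⟨Commute.refl g, 2, ?_, ?_⟩
  · have : c.lt (g ^ (1:ℤ)) (g ^ (2:ℤ)) := zpow_lt_zpow hg (by omega)
    simpa using this
  · have : c.lt (g ^ (-2:ℤ)) (g ^ (1:ℤ)) := zpow_lt_zpow hg (by omega)
    simpa using this

lemma BS_inv_mem (hg : c.lt 1 g) {x : G} (hx : x ∈ BS c g) : x⁻¹ ∈ BS c g := by
  obtain ⟨hc, N, h1, h2⟩ := hx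
  refine ⟨hc.inv_right, N, ?_, ?_⟩
  · have := Cone.inv_lt_inv h2
    rwa [zpow_neg, inv_inv] at this
  · have := Cone.inv_lt_inv h1
    rwa [← zpow_neg] at this

lemma BS_mul_mem (hg : c.lt 1 g) {x y : G} (hx : x ∈ BS c g) (hy : y ∈ BS c g) :
    x * y ∈ BS c g := by
  obtain ⟨hcx, N, h1, h2⟩ := hx
  obtain ⟨hcy, N', h1', h2'⟩ := hy
  refine ⟨hcx.mul_right hcy, N + N', ?_, ?_⟩
  · have := Cone.lt_mul_lt h1 h1'
    rwa [← zpow_add, show ((N:ℤ)) + N' = ((N + N' : ℕ) : ℤ) by push_cast; ring] at this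
  · have := Cone.lt_mul_lt h2 h2'
    rwa [← zpow_add, show (-(N:ℤ)) + -(N':ℤ) = (-((N + N' : ℕ) : ℤ)) by push_cast; ring] at this

lemma DS_subset_BS (hg : c.lt 1 g) {x : G} (hx : x ∈ DS c g) : x ∈ BS c g := by
  refine ⟨hx.1, 1, ?_, ?_⟩
  · simpa using DS_lt_g hx
  · have := g_inv_lt_DS hx
    simpa [zpow_neg] using this

lemma isolator_subset_BS (hg : c.lt 1 g) {x : G} (hx : x ∈ Isolator g) : x ∈ BS c g := by
  obtain ⟨k, hk, m, hm⟩ := mem_isolator_iff_nat.1 hx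
  have hcom := commute_g_of_mem_isolator c hx
  have hk1 : (1:ℤ) ≤ (k:ℤ) := by exact_mod_cast hk
  set N : ℕ := m.natAbs + 1 with hN
  have hNc : (N:ℤ) = (m.natAbs : ℤ) + 1 := by rw [hN]; push_cast; ring
  refine ⟨hcom, N, ?_, ?_⟩
  · by_contra hcon
    rw [Cone.not_lt_iff_le] at hcon
    have h1 : c.le ((g ^ (N:ℤ)) ^ k) (x ^ k) := Cone.pow_le_pow hcon k
    rw [hm, ← zpow_natCast (g ^ (N:ℤ)) k, ← zpow_mul] at h1
    have hNk : (N:ℤ) ≤ (N:ℤ) * k := le_mul_of_one_le_right (by positivity) hk1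
    rcases h1 with h1 | h1
    · have he : (N:ℤ) * k = m := zpow_inj hg h1
      omega
    · have := (zpow_lt_iff hg).1 h1
      omega
  · by_contra hcon
    rw [Cone.not_lt_iff_le] at hcon
    have h1 : c.le (x ^ k) ((g ^ (-(N:ℤ))) ^ k) := Cone.pow_le_pow hcon k
    rw [hm, ← zpow_natCast (g ^ (-(N:ℤ))) k, ← zpow_mul] at h1
    have hNk : (-(N:ℤ)) * k ≤ -(N:ℤ) := by nlinarith
    rcases h1 with h1 | h1
    · have he : m = (-(N:ℤ)) * k := zpow_inj hg h1
      omega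
    · have := (zpow_lt_iff hg).1 h1
      omega

end DB

section TSsec

variable {c : Cone G} {g : G}

lemma exists_argmin (f : ℕ → G) : ∀ n : ℕ, 0 < n → ∃ i, i < n ∧ ∀ j, j < n → c.le (f i) (f j) := by
  intro n
  induction n with
  | zero => omega
  | succ m ih =>
    intro _
    rcases Nat.eq_zero_or_pos m with rfl | hm
    · exact ⟨0, by omega, fun j hj => by interval_cases j; exact Cone.le_refl _⟩
    · obtain ⟨i, hi, hmin⟩ := ih hm
      rcases Cone.le_total' (f i) (f m) with h | h
      · refine ⟨i, by omega, fun j hj => ?_⟩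
        rcases Nat.lt_or_ge j m with hj' | hj'
        · exact hmin j hj'
        · have : j = m := by omega
          subst this; exact h
      · refine ⟨m, by omega, fun j hj => ?_⟩
        rcases Nat.lt_or_ge j m with hj' | hj'
        · exact Cone.le_trans' h (hmin j hj')
        · have : j = m := by omega
          subst this; exact Cone.le_refl _

lemma exists_argmax (f : ℕ → G) : ∀ n : ℕ, 0 < n → ∃ i, i < n ∧ ∀ j, j < n → c.le (f j) (f i) := by
  intro n hn
  obtain ⟨i, hi, hmin⟩ := exists_argmin (c := c) (fun j => (f j)⁻¹) n hn
  refine ⟨i, hi, fun j hj => ?_⟩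
  rcases hmin j hj with h | h
  · exact Or.inl (by simpa using congrArg (·⁻¹) h.symm)
  · exact Or.inr (by simpa using Cone.inv_lt_inv h)

/-- key identity-based lower bound: if `z` is below all conjugates `y^i x y^{-i}`, `i < n`,
then `z^n y^n ≤ (x y)^n`. -/
lemma conj_prod_lower {x y z : G} :
    ∀ n : ℕ, (∀ i, i < n → c.le z (y ^ i * x * (y ^ i)⁻¹)) →
      c.le (z ^ n * y ^ n) ((x * y) ^ n) := by
  intro n
  induction n with
  | zero => simp [Cone.le_refl]
  | succ m ih =>
    intro h
    have hstep := h m (by omega)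
    have e1 : (x * y) ^ (m + 1) = (x * y) ^ m * (x * y) := pow_succ _ _
    have e2 : z ^ m * y ^ m * (x * y) = z ^ m * (y ^ m * x * (y ^ m)⁻¹) * y ^ (m + 1) := by
      group
    have h1 : c.le (z ^ m * y ^ m * (x * y)) ((x * y) ^ m * (x * y)) :=
      Cone.le_mul_right (ih (fun i hi => h i (by omega))) _
    have h2 : c.le (z ^ (m+1) * y ^ (m+1)) (z ^ m * y ^ m * (x * y)) := by
      rw [e2]
      have : c.le (z ^ m * z * y ^ (m+1)) (z ^ m * (y ^ m * x * (y ^ m)⁻¹) * y ^ (m + 1)) :=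
        Cone.le_mul_right (Cone.le_mul_left hstep _) _
      rwa [← pow_succ] at this
    rw [e1]
    exact Cone.le_trans' h2 h1

lemma conj_prod_upper {x y w : G} :
    ∀ n : ℕ, (∀ i, i < n → c.le (y ^ i * x * (y ^ i)⁻¹) w) →
      c.le ((x * y) ^ n) (w ^ n * y ^ n) := by
  intro n
  induction n with
  | zero => simp [Cone.le_refl]
  | succ m ih =>
    intro h
    have hstep := h m (by omega)
    have e2 : w ^ m * y ^ m * (x * y) = w ^ m * (y ^ m * x * (y ^ m)⁻¹) * y ^ (m + 1) := by
      group
    have h1 : c.le ((x * y) ^ m * (x * y)) (w ^ m * y ^ m * (x * y)) :=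
      Cone.le_mul_right (ih (fun i hi => h i (by omega))) _
    have h2 : c.le (w ^ m * y ^ m * (x * y)) (w ^ (m+1) * y ^ (m+1)) := by
      rw [e2]
      have : c.le (w ^ m * (y ^ m * x * (y ^ m)⁻¹) * y ^ (m + 1)) (w ^ m * w * y ^ (m+1)) :=
        Cone.le_mul_right (Cone.le_mul_left hstep _) _
      rwa [← pow_succ] at this
    rw [pow_succ]
    exact Cone.le_trans' h1 h2

lemma DS_pow_mem (hg : c.lt 1 g) {d : G} (hd : d ∈ DS c g) (n : ℕ) : d ^ n ∈ DS c g := by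
  induction n with
  | zero => simpa using one_mem_DS hg
  | succ m ih => rw [pow_succ]; exact DS_mul_mem ih hd

/-- witness predicate: `x^k` lies in the coset `g^m · D`. -/
def Wit (c : Cone G) (g x : G) (k : ℕ) (m : ℤ) : Prop := x ^ k * (g ^ m)⁻¹ ∈ DS c g

lemma wit_commute {x : G} (hx : Commute g x) (k : ℕ) (m : ℤ) :
    Commute (x ^ k) ((g ^ m)⁻¹) :=
  (((hx.symm.pow_left k).zpow_right m).inv_right)

lemma wit_pow (hg : c.lt 1 g) {x : G} (hx : Commute g x) {k : ℕ} {m : ℤ}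
    (h : Wit c g x k m) {j : ℕ} (hj : 0 < j) : Wit c g x (k * j) (m * j) := by
  have hcom := wit_commute hx k m
  have e2 : ((g ^ m)⁻¹ : G) ^ j = (g ^ (m * (j:ℤ)))⁻¹ := by
    rw [inv_pow, ← zpow_natCast (g ^ m) j, ← zpow_mul]
  have e1 : (x ^ k * (g ^ m)⁻¹) ^ j = x ^ (k * j) * (g ^ (m * (j:ℤ)))⁻¹ := by
    rw [hcom.mul_pow, pow_mul, e2]
  have h3 := DS_pow_mem hg h j
  rw [e1] at h3
  exact h3

lemma wit_eq_exp (hg : c.lt 1 g) {x : G} {k k' : ℕ} {m m' : ℤ} (hk : 0 < k) (hk' : 0 < k')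
    (hx : Commute g x) (h : Wit c g x k m) (h' : Wit c g x k' m') :
    m * k' = m' * k := by
  have h1 := wit_pow hg hx h hk'
  have h2 := wit_pow hg hx h' hk
  rw [show k' * k = k * k' from mul_comm _ _] at h2
  -- quotient of the two wits is a g-power in DS
  have h3 : (x ^ (k * k') * (g ^ (m * k'))⁻¹)⁻¹ * (x ^ (k * k') * (g ^ (m' * k))⁻¹) ∈ DS c g :=
    DS_mul_mem (DS_inv_mem h1) h2
  have hcom := wit_commute hx (k * k') (m' * k)
  have e : (x ^ (k * k') * (g ^ (m * (k':ℤ)))⁻¹)⁻¹ * (x ^ (k * k') * (g ^ (m' * (k:ℤ)))⁻¹)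
      = g ^ (m * (k':ℤ) - m' * (k:ℤ)) := by
    rw [zpow_sub]
    group
  rw [e] at h3
  have := g_zpow_mem_DS hg h3
  omega

lemma TS_def {x : G} : x ∈ TS c g ↔ x ∈ BS c g ∧ ∃ k : ℕ, 0 < k ∧ ∃ m : ℤ, Wit c g x k m :=
  Iff.rfl

lemma TS_subset_BS {x : G} (hx : x ∈ TS c g) : x ∈ BS c g := hx.1

lemma TS_commute {x : G} (hx : x ∈ TS c g) : Commute g x := hx.1.1

lemma one_mem_TS (hg : c.lt 1 g) : (1 : G) ∈ TS c g :=
  ⟨one_mem_BS hg, 1, one_pos, 0, by simpa [Wit] using one_mem_DS hg⟩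

lemma TS_inv_mem (hg : c.lt 1 g) {x : G} (hx : x ∈ TS c g) : x⁻¹ ∈ TS c g := by
  obtain ⟨hB, k, hk, m, hw⟩ := hx
  refine ⟨BS_inv_mem hg hB, k, hk, -m, ?_⟩
  have hc2 : (g:G) ^ m * (x ^ k)⁻¹ = (x ^ k)⁻¹ * g ^ m :=
    ((hB.1.pow_right k).zpow_left m).inv_right.eq
  have e : (x ^ k * (g ^ m)⁻¹)⁻¹ = x⁻¹ ^ k * (g ^ (-m))⁻¹ := by
    rw [mul_inv_rev, inv_inv, hc2, inv_pow, zpow_neg, inv_inv]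
  have h4 := DS_inv_mem hw
  rw [e] at h4
  exact h4

lemma DS_subset_TS (hg : c.lt 1 g) {x : G} (hx : x ∈ DS c g) : x ∈ TS c g :=
  ⟨DS_subset_BS hg hx, 1, one_pos, 0, by simpa [Wit] using hx⟩

lemma isolator_subset_TS (hg : c.lt 1 g) {x : G} (hx : x ∈ Isolator g) : x ∈ TS c g := by
  obtain ⟨k, hk, m, hm⟩ := mem_isolator_iff_nat.1 hx
  exact ⟨isolator_subset_BS hg hx, k, hk, m, by simp [Wit, hm, one_mem_DS hg]⟩

/-- the combined sandwich for products: if `x, y ∈ B` have wits `(K, A)`, `(K, B)` then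
`x*y` has wit `(K, A+B)`, with control of the sign. -/
lemma TS_mul_wit (hg : c.lt 1 g) {x y : G} (hxB : Commute g x) (hyB : Commute g y)
    {K : ℕ} (hK : 0 < K) {A B : ℤ} (hwx : Wit c g x K A) (hwy : Wit c g y K B) :
    Wit c g (x * y) K (A + B) ∧
      (c.lt 1 (x ^ K * (g ^ A)⁻¹) → c.le 1 (y ^ K * (g ^ B)⁻¹) →
        c.lt (g ^ (A + B)) ((x * y) ^ K)) ∧
      (c.le 1 (x ^ K * (g ^ A)⁻¹) → c.lt 1 (y ^ K * (g ^ B)⁻¹) →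
        c.lt (g ^ (A + B)) ((x * y) ^ K)) := by
  set px := x ^ K * (g ^ A)⁻¹ with hpx
  set py := y ^ K * (g ^ B)⁻¹ with hpy
  have hxK : x ^ K = px * g ^ A := by rw [hpx]; group
  have hyK : y ^ K = py * g ^ B := by rw [hpy]; group
  -- conjugates
  set f : ℕ → G := fun i => y ^ i * x * (y ^ i)⁻¹ with hf
  have hconjpow : ∀ i : ℕ, (f i) ^ K = (y ^ i * px * (y ^ i)⁻¹) * g ^ A := by
    intro i
    rw [hf]
    simp only
    rw [conj_pow_eq, hxK]
    have hcom : Commute (y ^ i) (g ^ A) := ((hyB.symm.pow_left i).zpow_right A)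
    calc y ^ i * (px * g ^ A) * (y ^ i)⁻¹
        = y ^ i * px * (g ^ A * (y ^ i)⁻¹) := by group
      _ = y ^ i * px * ((y ^ i)⁻¹ * g ^ A) := by rw [hcom.inv_left.eq]
      _ = (y ^ i * px * (y ^ i)⁻¹) * g ^ A := by group
  have hpxD : px ∈ DS c g := hwx
  have hpyD : py ∈ DS c g := hwy
  have hpconj : ∀ i : ℕ, (y ^ i * px * (y ^ i)⁻¹) ∈ DS c g :=
    fun i => DS_conj_mem (hyB.pow_right i) hpxD
  obtain ⟨i0, hi0, hmin⟩ := exists_argmin (c := c) f K hK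
  obtain ⟨i1, hi1, hmax⟩ := exists_argmax (c := c) f K hK
  have hlow : c.le ((f i0) ^ K * y ^ K) ((x * y) ^ K) :=
    conj_prod_lower K (fun i hi => hmin i hi)
  have hup : c.le ((x * y) ^ K) ((f i1) ^ K * y ^ K) :=
    conj_prod_upper K (fun i hi => hmax i hi)
  -- rewrite bounds in the form d * g^(A+B)
  have hbound : ∀ i : ℕ, (f i) ^ K * y ^ K
      = ((y ^ i * px * (y ^ i)⁻¹) * py) * g ^ (A + B) := by
    intro i
    rw [hconjpow i, hyK]
    have hcomA : Commute (g ^ A) py := ((DS_commute hpyD).zpow_left A)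
    calc (y ^ i * px * (y ^ i)⁻¹) * g ^ A * (py * g ^ B)
        = (y ^ i * px * (y ^ i)⁻¹) * (g ^ A * py) * g ^ B := by group
      _ = (y ^ i * px * (y ^ i)⁻¹) * (py * g ^ A) * g ^ B := by rw [hcomA.eq]
      _ = ((y ^ i * px * (y ^ i)⁻¹) * py) * (g ^ A * g ^ B) := by group
      _ = ((y ^ i * px * (y ^ i)⁻¹) * py) * g ^ (A + B) := by rw [← zpow_add]
  refine ⟨?_, ?_, ?_⟩
  · -- membership: sandwich in DS
    have hlow' : c.le (((y ^ i0 * px * (y ^ i0)⁻¹) * py) * g ^ (A + B)) ((x * y) ^ K) := by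
      rw [← hbound i0]; exact hlow
    have hup' : c.le ((x * y) ^ K) (((y ^ i1 * px * (y ^ i1)⁻¹) * py) * g ^ (A + B)) := by
      rw [← hbound i1]; exact hup
    have h1 : c.le ((y ^ i0 * px * (y ^ i0)⁻¹) * py) ((x * y) ^ K * (g ^ (A + B))⁻¹) := by
      have := Cone.le_mul_right hlow' (g ^ (A + B))⁻¹
      rwa [mul_assoc, mul_inv_cancel, mul_one] at this
    have h2 : c.le ((x * y) ^ K * (g ^ (A + B))⁻¹) ((y ^ i1 * px * (y ^ i1)⁻¹) * py) := by
      have := Cone.le_mul_right hup' (g ^ (A + B))⁻¹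
      rwa [mul_assoc, mul_inv_cancel, mul_one] at this
    have hcom : Commute g ((x * y) ^ K * (g ^ (A + B))⁻¹) := by
      have h3 : Commute g (x * y) := hxB.mul_right hyB
      exact (h3.pow_right K).mul_right ((Commute.refl g).zpow_right (A + B)).inv_right
    exact DS_convex hg (DS_mul_mem (hpconj i0) hpyD) (DS_mul_mem (hpconj i1) hpyD)
      hcom h1 h2
  · -- sign, strict-first
    intro hpx1 hpy1
    have hp0 : c.lt 1 (y ^ i0 * px * (y ^ i0)⁻¹) := by
      have := Cone.lt_conj hpx1 (y ^ i0)
      simpa using this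
    have : c.lt 1 ((y ^ i0 * px * (y ^ i0)⁻¹) * py) := by
      have := Cone.lt_mul_le hp0 hpy1
      simpa using this
    have h4 : c.lt (g ^ (A + B)) (((y ^ i0 * px * (y ^ i0)⁻¹) * py) * g ^ (A + B)) := by
      have := Cone.lt_mul_right this (g ^ (A + B))
      simpa using this
    refine Cone.lt_of_lt_of_le h4 ?_
    rw [← hbound i0]
    exact hlow
  · -- sign, strict-second
    intro hpx1 hpy1
    have hp0 : c.le 1 (y ^ i0 * px * (y ^ i0)⁻¹) := by
      rcases hpx1 with h | h
      · exact Or.inl (by rw [← h]; group)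
      · exact Cone.le_of_lt (by simpa using Cone.lt_conj h (y ^ i0))
    have : c.lt 1 ((y ^ i0 * px * (y ^ i0)⁻¹) * py) := by
      have := Cone.le_mul_lt hp0 hpy1
      simpa using this
    have h4 : c.lt (g ^ (A + B)) (((y ^ i0 * px * (y ^ i0)⁻¹) * py) * g ^ (A + B)) := by
      have := Cone.lt_mul_right this (g ^ (A + B))
      simpa using this
    refine Cone.lt_of_lt_of_le h4 ?_
    rw [← hbound i0]
    exact hlow

lemma TS_mul_mem (hg : c.lt 1 g) {x y : G} (hx : x ∈ TS c g) (hy : y ∈ TS c g) :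
    x * y ∈ TS c g := by
  obtain ⟨hxB, k, hk, m, hw⟩ := hx
  obtain ⟨hyB, k', hk', m', hw'⟩ := hy
  have h1 := wit_pow hg hxB.1 hw hk'
  have h2 := wit_pow hg hyB.1 hw' hk
  rw [show k' * k = k * k' from mul_comm _ _] at h2
  have := (TS_mul_wit hg hxB.1 hyB.1 (by positivity) h1 h2).1
  exact ⟨BS_mul_mem hg hxB hyB, k * k', by positivity, m * k' + m' * k, this⟩

lemma TS_isolated {x : G} {n : ℕ} (hn : 0 < n) (hxB : x ∈ BS c g) (hx : x ^ n ∈ TS c g) :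
    x ∈ TS c g := by
  obtain ⟨_, k, hk, m, hw⟩ := hx
  refine ⟨hxB, n * k, by positivity, m, ?_⟩
  show x ^ (n * k) * (g ^ m)⁻¹ ∈ DS c g
  rw [pow_mul]
  exact hw

end TSsec

section FZ

variable {c : Cone G} {g : G}

/-- the fuzz-positive part of `T`. -/
def QFZ (c : Cone G) (g : G) : Set G :=
  {x | x ∈ TS c g ∧ x ∉ Isolator g ∧
    ∃ k : ℕ, 0 < k ∧ ∃ m : ℤ, Wit c g x k m ∧ c.lt (g ^ m) (x ^ k)}

lemma lt_iff_one_lt_mul_inv {a b : G} : c.lt a b ↔ c.lt 1 (b * a⁻¹) := by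
  constructor
  · intro h
    have := Cone.lt_mul_right h a⁻¹
    simpa using this
  · intro h
    have := Cone.lt_mul_right h a
    simpa using this

lemma sign_raise (hg : c.lt 1 g) {x : G} {k : ℕ} {m : ℤ} (hk : 0 < k)
    (hs : c.lt (g ^ m) (x ^ k)) {j : ℕ} (hj : 0 < j) :
    c.lt (g ^ (m * (j:ℤ))) (x ^ (k * j)) := by
  have := Cone.pow_lt_pow hs j hj
  rwa [← zpow_natCast (g ^ m) j, ← zpow_mul, ← pow_mul] at this

lemma fz_sign_wd (hg : c.lt 1 g) {x : G} (hxc : Commute g x) {k k' : ℕ} {m m' : ℤ}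
    (hk : 0 < k) (hk' : 0 < k') (hw : Wit c g x k m) (hw' : Wit c g x k' m')
    (hs : c.lt (g ^ m) (x ^ k)) : c.lt (g ^ m') (x ^ k') := by
  have hexp : m * k' = m' * k := wit_eq_exp hg hk hk' hxc hw hw'
  by_contra hcon
  rw [Cone.not_lt_iff_le] at hcon
  have h1 : c.lt (g ^ (m * (k':ℤ))) (x ^ (k * k')) := sign_raise hg hk hs hk'
  have h2 : c.le ((x ^ k') ^ k) ((g ^ m') ^ k) := Cone.pow_le_pow hcon k
  rw [← pow_mul, ← zpow_natCast (g ^ m') k, ← zpow_mul, mul_comm k' k] at h2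
  have := Cone.lt_of_lt_of_le h1 h2
  rw [hexp] at this
  exact Cone.lt_irrefl _ this

lemma isolator_no_strict_sign (hg : c.lt 1 g) {x : G} (hx : x ∈ Isolator g) {k : ℕ} {m : ℤ}
    (hk : 0 < k) (hw : Wit c g x k m) (hs : c.lt (g ^ m) (x ^ k)) : False := by
  obtain ⟨kh, hkh, r, hr⟩ := mem_isolator_iff_nat.1 hx
  have hxc := commute_g_of_mem_isolator c hx
  have hwh : Wit c g x kh r := by
    show x ^ kh * (g ^ r)⁻¹ ∈ DS c g
    rw [hr]
    simpa using one_mem_DS hg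
  have := fz_sign_wd hg hxc hk hkh hw hwh hs
  rw [hr] at this
  exact Cone.lt_irrefl _ this

lemma QFZ_subset_TS {x : G} (hx : x ∈ QFZ c g) : x ∈ TS c g := hx.1

lemma QFZ_not_isolator {x : G} (hx : x ∈ QFZ c g) : x ∉ Isolator g := hx.2.1

lemma QFZ_inv_not (hg : c.lt 1 g) {x : G} (hx : x ∈ QFZ c g) : x⁻¹ ∉ QFZ c g := by
  rintro ⟨hT, hH, k', hk', m', hw', hs'⟩
  obtain ⟨hTx, hHx, k, hk, m, hw, hs⟩ := hx
  -- x⁻¹ has wit (k, -m) with negative sign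
  have hwinv : Wit c g x⁻¹ k (-m) := by
    have := TS_inv_mem hg hTx
    -- direct: reuse computation
    have hc2 : (g:G) ^ m * (x ^ k)⁻¹ = (x ^ k)⁻¹ * g ^ m :=
      (((TS_commute hTx).pow_right k).zpow_left m).inv_right.eq
    have e : (x ^ k * (g ^ m)⁻¹)⁻¹ = x⁻¹ ^ k * (g ^ (-m))⁻¹ := by
      rw [mul_inv_rev, inv_inv, hc2, inv_pow, zpow_neg, inv_inv]
    have h4 := DS_inv_mem hw
    rw [e] at h4
    exact h4
  have hxc : Commute g x⁻¹ := (TS_commute hTx).inv_right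
  have := fz_sign_wd hg hxc hk' hk hw' hwinv hs'
  -- this : g ^ (-m) ≺ x⁻¹ ^ k, contradict hs
  have h5 : c.lt (x⁻¹ ^ k) (g ^ (-m)) := by
    have := Cone.inv_lt_inv hs
    rwa [← inv_pow, ← zpow_neg] at this
  exact Cone.lt_asymm h5 this

lemma QFZ_or_inv (hg : c.lt 1 g) {x : G} (hxT : x ∈ TS c g) (hxH : x ∉ Isolator g) :
    x ∈ QFZ c g ∨ x⁻¹ ∈ QFZ c g := by
  obtain ⟨hB, k, hk, m, hw⟩ := hxT
  have hne : x ^ k ≠ g ^ m := by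
    intro he
    exact hxH (mem_isolator_iff_nat.2 ⟨k, hk, m, he⟩)
  rcases Cone.lt_total (Ne.symm hne) with h | h
  · exact Or.inl ⟨⟨hB, k, hk, m, hw⟩, hxH, k, hk, m, hw, h⟩
  · right
    have hwinv : Wit c g x⁻¹ k (-m) := by
      have hc2 : (g:G) ^ m * (x ^ k)⁻¹ = (x ^ k)⁻¹ * g ^ m :=
        ((hB.1.pow_right k).zpow_left m).inv_right.eq
      have e : (x ^ k * (g ^ m)⁻¹)⁻¹ = x⁻¹ ^ k * (g ^ (-m))⁻¹ := by
        rw [mul_inv_rev, inv_inv, hc2, inv_pow, zpow_neg, inv_inv]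
      have h4 := DS_inv_mem hw
      rw [e] at h4
      exact h4
    have hsinv : c.lt (g ^ (-m)) (x⁻¹ ^ k) := by
      have := Cone.inv_lt_inv h
      rwa [← inv_pow, ← zpow_neg] at this
    exact ⟨TS_inv_mem hg ⟨hB, k, hk, m, hw⟩,
      fun hcon => hxH (by simpa using isolator_inv_mem hcon), k, hk, -m, hwinv, hsinv⟩

/-- closure of the fuzz-positives under multiplication (and with the positive part of `H`). -/
lemma QFZ_mul_QFZ (hg : c.lt 1 g) {x y : G} (hx : x ∈ QFZ c g) (hy : y ∈ QFZ c g) :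
    x * y ∈ QFZ c g := by
  obtain ⟨hTx, hHx, k, hk, m, hw, hs⟩ := hx
  obtain ⟨hTy, hHy, k', hk', m', hw', hs'⟩ := hy
  have hxB := TS_subset_BS hTx
  have hyB := TS_subset_BS hTy
  have h1 := wit_pow hg hxB.1 hw hk'
  have h2 := wit_pow hg hyB.1 hw' hk
  rw [show k' * k = k * k' from mul_comm _ _] at h2
  have hs1 : c.lt (g ^ (m * (k':ℤ))) (x ^ (k * k')) := sign_raise hg hk hs hk'
  have hs2 : c.lt (g ^ (m' * (k:ℤ))) (y ^ (k * k')) := by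
    have := sign_raise hg hk' hs' hk
    rwa [mul_comm k' k] at this
  have hKpos : 0 < k * k' := by positivity
  obtain ⟨hwit, hsgn, _⟩ := TS_mul_wit hg hxB.1 hyB.1 hKpos h1 h2
  have hpx1 : c.lt 1 (x ^ (k * k') * (g ^ (m * (k':ℤ)))⁻¹) := by
    rw [← lt_iff_one_lt_mul_inv]
    exact hs1
  have hpy1 : c.le 1 (y ^ (k * k') * (g ^ (m' * (k:ℤ)))⁻¹) := by
    refine Cone.le_of_lt ?_
    rw [← lt_iff_one_lt_mul_inv]
    exact hs2
  have hsfinal := hsgn hpx1 hpy1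
  have hTxy : x * y ∈ TS c g := TS_mul_mem hg hTx hTy
  have hHxy : x * y ∉ Isolator g := fun hcon =>
    isolator_no_strict_sign hg hcon hKpos hwit hsfinal
  exact ⟨hTxy, hHxy, k * k', hKpos, m * k' + m' * k, hwit, hsfinal⟩

lemma isolator_wit (hg : c.lt 1 g) {h : G} (hh : h ∈ Isolator g) :
    ∃ kh : ℕ, 0 < kh ∧ ∃ r : ℤ, h ^ kh = g ^ r := mem_isolator_iff_nat.1 hh

lemma QFZ_mul_isolator (hg : c.lt 1 g) {x h : G} (hx : x ∈ QFZ c g) (hh : h ∈ Isolator g) :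
    x * h ∈ QFZ c g := by
  obtain ⟨hTx, hHx, k, hk, m, hw, hs⟩ := hx
  obtain ⟨kh, hkh, r, hr⟩ := mem_isolator_iff_nat.1 hh
  have hxB := TS_subset_BS hTx
  have hhB := isolator_subset_BS hg hh
  have h1 := wit_pow hg hxB.1 hw hkh
  have hwh : Wit c g h (k * kh) (r * k) := by
    show h ^ (k * kh) * (g ^ (r * (k:ℤ)))⁻¹ ∈ DS c g
    rw [mul_comm k kh, pow_mul, hr, ← zpow_natCast (g ^ r) k, ← zpow_mul]
    simpa using one_mem_DS hg
  have hs1 : c.lt (g ^ (m * (kh:ℤ))) (x ^ (k * kh)) := sign_raise hg hk hs hkh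
  have hKpos : 0 < k * kh := by positivity
  obtain ⟨hwit, hsgn, _⟩ := TS_mul_wit hg hxB.1 hhB.1 hKpos h1 hwh
  have hpx1 : c.lt 1 (x ^ (k * kh) * (g ^ (m * (kh:ℤ)))⁻¹) := by
    rw [← lt_iff_one_lt_mul_inv]; exact hs1
  have hpy1 : c.le 1 (h ^ (k * kh) * (g ^ (r * (k:ℤ)))⁻¹) := by
    refine Or.inl ?_
    rw [mul_comm k kh, pow_mul, hr, ← zpow_natCast (g ^ r) k, ← zpow_mul]
    group
  have hsfinal := hsgn hpx1 hpy1
  have hTxh : x * h ∈ TS c g := TS_mul_mem hg hTx (isolator_subset_TS hg hh)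
  have hHxh : x * h ∉ Isolator g := by
    intro hcon
    have : x = (x * h) * h⁻¹ := by group
    exact hHx (this ▸ isolator_mul_mem c hcon (isolator_inv_mem hh))
  exact ⟨hTxh, hHxh, k * kh, hKpos, m * kh + r * k, hwit, hsfinal⟩

lemma isolator_mul_QFZ (hg : c.lt 1 g) {x h : G} (hh : h ∈ Isolator g) (hx : x ∈ QFZ c g) :
    h * x ∈ QFZ c g := by
  obtain ⟨hTx, hHx, k, hk, m, hw, hs⟩ := hx
  obtain ⟨kh, hkh, r, hr⟩ := mem_isolator_iff_nat.1 hh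
  have hxB := TS_subset_BS hTx
  have hhB := isolator_subset_BS hg hh
  have h1 := wit_pow hg hxB.1 hw hkh
  have hwh : Wit c g h (kh * k) (r * k) := by
    show h ^ (kh * k) * (g ^ (r * (k:ℤ)))⁻¹ ∈ DS c g
    rw [pow_mul, hr, ← zpow_natCast (g ^ r) k, ← zpow_mul]
    simpa using one_mem_DS hg
  rw [show kh * k = k * kh from mul_comm _ _] at hwh
  have hs1 : c.lt (g ^ (m * (kh:ℤ))) (x ^ (k * kh)) := sign_raise hg hk hs hkh
  have hKpos : 0 < k * kh := by positivity
  obtain ⟨hwit, _, hsgn⟩ := TS_mul_wit hg hhB.1 hxB.1 hKpos hwh h1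
  have hpy1 : c.lt 1 (x ^ (k * kh) * (g ^ (m * (kh:ℤ)))⁻¹) := by
    rw [← lt_iff_one_lt_mul_inv]; exact hs1
  have hpx1 : c.le 1 (h ^ (k * kh) * (g ^ (r * (k:ℤ)))⁻¹) := by
    refine Or.inl ?_
    rw [mul_comm k kh, pow_mul, hr, ← zpow_natCast (g ^ r) k, ← zpow_mul]
    group
  have hsfinal := hsgn hpx1 hpy1
  have hThx : h * x ∈ TS c g := TS_mul_mem hg (isolator_subset_TS hg hh) hTx
  have hHhx : h * x ∉ Isolator g := by
    intro hcon
    have : x = h⁻¹ * (h * x) := by group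
    exact hHx (this ▸ isolator_mul_mem c (isolator_inv_mem hh) hcon)
  exact ⟨hThx, hHhx, k * kh, hKpos, r * k + m * kh, hwit, hsfinal⟩

end FZ

section LOWUP

variable {c : Cone G} {g : G}

/-- `x^k` is above the whole coset `g^m · D`. -/
def LOW (c : Cone G) (g x : G) (k : ℕ) (m : ℤ) : Prop :=
  ∀ d ∈ DS c g, c.lt (g ^ m * d) (x ^ k)

/-- `x^k` is below the whole coset `g^m · D`. -/
def UP (c : Cone G) (g x : G) (k : ℕ) (m : ℤ) : Prop :=
  ∀ d ∈ DS c g, c.lt (x ^ k) (g ^ m * d)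

lemma UP_iff_LOW_inv {x : G} {k : ℕ} {m : ℤ} (hx : Commute g x) :
    UP c g x k m ↔ LOW c g x⁻¹ k (-m) := by
  constructor
  · intro h d hd
    have h1 := h d⁻¹ (DS_inv_mem hd)
    have h2 := Cone.inv_lt_inv h1
    have e : (g ^ m * d⁻¹)⁻¹ = g ^ (-m) * d := by
      rw [mul_inv_rev, inv_inv, ← zpow_neg]
      exact ((hd.1.zpow_left (-m)).eq).symm
    rw [e, ← inv_pow] at h2
    exact h2
  · intro h d hd
    have h1 := h d⁻¹ (DS_inv_mem hd)
    have h2 := Cone.inv_lt_inv h1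
    have e : (g ^ (-m) * d⁻¹)⁻¹ = g ^ m * d := by
      rw [mul_inv_rev, inv_inv, zpow_neg, inv_inv]
      exact ((hd.1.zpow_left m).eq).symm
    rw [e, ← inv_pow, inv_inv] at h2
    exact h2

end LOWUP

section LOWUP2

variable {c : Cone G} {g : G}

lemma le_pow_self {δ : G} (hδ : c.le 1 δ) : ∀ j : ℕ, 0 < j → c.le δ (δ ^ j) := by
  intro j
  induction j with
  | zero => omega
  | succ i ih =>
    intro _
    rcases Nat.eq_zero_or_pos i with rfl | hi
    · simp [Cone.le_refl]
    · have h1 : c.le (δ ^ i * 1) (δ ^ i * δ) := Cone.le_mul_le (Cone.le_refl _) hδ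
      rw [mul_one, ← pow_succ] at h1
      exact Cone.le_trans' (ih hi) h1

lemma LOW_one_lt {x : G} {k : ℕ} {m : ℤ} (h : LOW c g x k m) (hg : c.lt 1 g) :
    c.lt (g ^ m) (x ^ k) := by
  have := h 1 (one_mem_DS hg)
  simpa using this

lemma LOW_raise (hg : c.lt 1 g) {x : G} (hx : Commute g x) {k : ℕ} {m : ℤ}
    (h : LOW c g x k m) {j : ℕ} (hj : 0 < j) : LOW c g x (k * j) (m * j) := by
  intro d hd
  rcases Cone.le_total' d 1 with hd1 | hd1
  · have h1 : c.lt ((g ^ m) ^ j) ((x ^ k) ^ j) := Cone.pow_lt_pow (LOW_one_lt h hg) j hj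
    rw [← pow_mul, ← zpow_natCast (g ^ m) j, ← zpow_mul] at h1
    have h2 : c.le (g ^ (m * (j:ℤ)) * d) (g ^ (m * (j:ℤ)))  := by
      have := Cone.le_mul_left hd1 (g ^ (m * (j:ℤ)))
      simpa using this
    exact Cone.lt_of_le_of_lt h2 h1
  · have hstep : c.lt (g ^ m * d) (x ^ k) := h d hd
    have h1 : c.lt ((g ^ m * d) ^ j) ((x ^ k) ^ j) := Cone.pow_lt_pow hstep j hj
    have hcom : Commute (g ^ m) d := hd.1.zpow_left m
    rw [hcom.mul_pow, ← pow_mul, ← zpow_natCast (g ^ m) j, ← zpow_mul] at h1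
    have h2 : c.le (g ^ (m * (j:ℤ)) * d) (g ^ (m * (j:ℤ)) * d ^ j) :=
      Cone.le_mul_left (le_pow_self hd1 j hj) _
    exact Cone.lt_of_le_of_lt h2 h1

lemma LOW_conj (hg : c.lt 1 g) {x z : G} (hz : Commute g z) {k : ℕ} {m : ℤ}
    (h : LOW c g x k m) : LOW c g (z * x * z⁻¹) k m := by
  intro d hd
  have hd' : z⁻¹ * d * z ∈ DS c g := by
    have := DS_conj_mem (hz.inv_right) hd
    simpa using this
  have h1 := h _ hd'
  have h2 := Cone.lt_conj h1 z
  rw [conj_pow_eq]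
  have e : z * (g ^ m * (z⁻¹ * d * z)) * z⁻¹ = g ^ m * d := by
    have hcom : Commute (g ^ m) z := (hz.symm.zpow_right m).symm
    calc z * (g ^ m * (z⁻¹ * d * z)) * z⁻¹ = z * g ^ m * z⁻¹ * d := by group
      _ = g ^ m * z * z⁻¹ * d := by rw [← hcom.eq]
      _ = g ^ m * d := by group
  rw [e] at h2
  exact h2

lemma LOW_mul (hg : c.lt 1 g) {x y : G} (hx : Commute g x) (hy : Commute g y)
    {k : ℕ} (hk : 0 < k) {a b : ℤ} (hlx : LOW c g x k a) (hly : LOW c g y k b) :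
    LOW c g (x * y) k (a + b) := by
  intro d hd
  set f : ℕ → G := fun i => y ^ i * x * (y ^ i)⁻¹ with hf
  obtain ⟨i0, hi0, hmin⟩ := exists_argmin (c := c) f k hk
  have hlow : c.le ((f i0) ^ k * y ^ k) ((x * y) ^ k) :=
    conj_prod_lower k (fun i hi => hmin i hi)
  have hfl : LOW c g (f i0) k a := LOW_conj hg (hy.pow_right i0) hlx
  have h1 : c.lt (g ^ a * d) ((f i0) ^ k) := hfl d hd
  have h2 : c.lt (g ^ b * 1) (y ^ k) := hly 1 (one_mem_DS hg)
  have h3 : c.lt ((g ^ a * d) * (g ^ b * 1)) ((f i0) ^ k * y ^ k) := Cone.lt_mul_lt h1 h2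
  have e : (g ^ a * d) * (g ^ b * 1) = g ^ (a + b) * d := by
    rw [mul_one, zpow_add]
    have hcom : Commute (g ^ b) d := hd.1.zpow_left b
    calc g ^ a * d * g ^ b = g ^ a * (d * g ^ b) := by group
      _ = g ^ a * (g ^ b * d) := by rw [← hcom.eq]
      _ = g ^ a * g ^ b * d := by group
  rw [e] at h3
  exact Cone.lt_of_lt_of_le h3 hlow

lemma UP_mul (hg : c.lt 1 g) {x y : G} (hx : Commute g x) (hy : Commute g y)
    {k : ℕ} (hk : 0 < k) {a b : ℤ} (hux : UP c g x k a) (huy : UP c g y k b) :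
    UP c g (x * y) k (a + b) := by
  have h1 : LOW c g x⁻¹ k (-a) := (UP_iff_LOW_inv hx).1 hux
  have h2 : LOW c g y⁻¹ k (-b) := (UP_iff_LOW_inv hy).1 huy
  have h3 : LOW c g (y⁻¹ * x⁻¹) k (-b + -a) :=
    LOW_mul hg hy.inv_right hx.inv_right hk h2 h1
  have h4 : UP c g (y⁻¹ * x⁻¹)⁻¹ k (-(-b + -a)) := by
    rw [UP_iff_LOW_inv ((hy.inv_right.mul_right hx.inv_right).inv_right), neg_neg]
    simpa using h3
  have e : (y⁻¹ * x⁻¹)⁻¹ = x * y := by group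
  rw [e] at h4
  have e2 : -(-b + -a) = a + b := by ring
  rwa [e2] at h4

/-- every bounded element has, for each `k ≥ 1`, a sandwich of width 3. -/
lemma sandwich (hg : c.lt 1 g) {x : G} (hx : x ∈ BS c g) {k : ℕ} (hk : 0 < k) :
    ∃ m : ℤ, LOW c g x k m ∧ UP c g x k (m + 3) := by
  obtain ⟨hcom, N, hub, hlb⟩ := hx
  -- the set of LOW-exponents is nonempty and bounded above
  have hne : LOW c g x k (-((N:ℤ) * k) - 1) := by
    intro d hd
    have h1 : c.lt ((g ^ (-(N:ℤ))) ^ k) (x ^ k) := Cone.pow_lt_pow hlb k hk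
    rw [← zpow_natCast (g ^ (-(N:ℤ))) k, ← zpow_mul] at h1
    have h2 : c.lt (g ^ (-((N:ℤ) * k) - 1) * d) (g ^ (-(N:ℤ) * k)) := by
      have hd1 : c.lt d g := DS_lt_g hd
      have := Cone.lt_mul_left hd1 (g ^ (-((N:ℤ) * k) - 1))
      rwa [show g ^ (-((N:ℤ) * k) - 1) * g = g ^ (-(N:ℤ) * k) by
        rw [← zpow_add_one]; ring_nf] at this
    exact Cone.lt_trans h2 h1
  have hbd : ∀ z : ℤ, LOW c g x k z → z ≤ (N:ℤ) * k := by
    intro z hz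
    have h1 : c.lt (g ^ z) (x ^ k) := LOW_one_lt hz hg
    have h2 : c.lt (x ^ k) ((g ^ (N:ℤ)) ^ k) := Cone.pow_lt_pow hub k hk
    rw [← zpow_natCast (g ^ (N:ℤ)) k, ← zpow_mul] at h2
    have := (zpow_lt_iff hg).1 (Cone.lt_trans h1 h2)
    omega
  obtain ⟨m, hm, hmax⟩ := Int.exists_greatest_of_bdd ⟨(N:ℤ) * k, hbd⟩ ⟨_, hne⟩
  refine ⟨m, hm, ?_⟩
  -- maximality: ¬ LOW (m+1), so ∃ d₀ with x^k ⪯ g^(m+1) d₀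
  have hnotlow : ¬ LOW c g x k (m + 1) := fun hcon => by
    have := hmax _ hcon; omega
  rw [LOW] at hnotlow
  push_neg at hnotlow
  obtain ⟨d0, hd0, hge⟩ := hnotlow
  rw [Cone.not_lt_iff_le] at hge
  intro d hd
  have key : c.lt (g ^ (m + 1) * d0) (g ^ (m + 3) * d) := by
    -- equivalent to 1 ≺ d0⁻¹ g^2 d
    have h1 : c.lt g⁻¹ d0⁻¹ := g_inv_lt_DS (DS_inv_mem hd0)
    have h2 : c.lt g⁻¹ d := g_inv_lt_DS hd
    have h3 : c.lt (g ^ (2:ℤ) * g⁻¹) (g ^ (2:ℤ) * d) := Cone.lt_mul_left h2 _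
    have h4 : c.lt (g⁻¹ * (g ^ (2:ℤ) * g⁻¹)) (d0⁻¹ * (g ^ (2:ℤ) * d)) :=
      Cone.lt_mul_lt h1 h3
    have e1 : g⁻¹ * (g ^ (2:ℤ) * g⁻¹) = 1 := by group
    rw [e1] at h4
    have h5 := Cone.lt_mul_left h4 (g ^ (m + 1) * d0)
    rw [mul_one] at h5
    have e2 : g ^ (m + 1) * d0 * (d0⁻¹ * (g ^ (2:ℤ) * d)) = g ^ (m + 3) * d := by
      have : g ^ (m+1) * g ^ (2:ℤ) = g ^ (m+3) := by rw [← zpow_add]; ring_nf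
      calc g ^ (m + 1) * d0 * (d0⁻¹ * (g ^ (2:ℤ) * d)) = g ^ (m+1) * g ^ (2:ℤ) * d := by group
        _ = g ^ (m + 3) * d := by rw [this]
    rw [e2] at h5
    exact h5
  exact Cone.lt_of_le_of_lt hge key

/-- commutators of bounded elements are infinitesimal (Hölder-type statement). -/
lemma comm_mem_DS (hg : c.lt 1 g) {u v : G} (hu : u ∈ BS c g) (hv : v ∈ BS c g) :
    u⁻¹ * v⁻¹ * (u * v) ∈ DS c g := by
  set w := u⁻¹ * v⁻¹ * (u * v) with hw
  have hwB : w ∈ BS c g := by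
    rw [hw]
    exact BS_mul_mem hg (BS_mul_mem hg (BS_inv_mem hg hu) (BS_inv_mem hg hv))
      (BS_mul_mem hg hu hv)
  have hcomw : Commute g w := hwB.1
  -- the two families
  have hLOW : ∀ k : ℕ, 0 < k → LOW c g w k (-6) := by
    intro k hk
    obtain ⟨mu, hlu, huu⟩ := sandwich hg hu hk
    obtain ⟨mv, hlv, huv⟩ := sandwich hg hv hk
    have h1 : LOW c g u⁻¹ k (-(mu + 3)) := (UP_iff_LOW_inv hu.1).1 huu
    have h2 : LOW c g v⁻¹ k (-(mv + 3)) := (UP_iff_LOW_inv hv.1).1 huv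
    have h3 : LOW c g (u * v) k (mu + mv) := LOW_mul hg hu.1 hv.1 hk hlu hlv
    have h4 : LOW c g (u⁻¹ * v⁻¹) k (-(mu + 3) + -(mv + 3)) :=
      LOW_mul hg hu.1.inv_right hv.1.inv_right hk h1 h2
    have h5 : LOW c g (u⁻¹ * v⁻¹ * (u * v)) k (-(mu + 3) + -(mv + 3) + (mu + mv)) :=
      LOW_mul hg (hu.1.inv_right.mul_right hv.1.inv_right) (hu.1.mul_right hv.1) hk h4 h3
    have e : -(mu + 3) + -(mv + 3) + (mu + mv) = -6 := by ring
    rwa [e] at h5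
  have hUP : ∀ k : ℕ, 0 < k → UP c g w k 6 := by
    intro k hk
    obtain ⟨mu, hlu, huu⟩ := sandwich hg hu hk
    obtain ⟨mv, hlv, huv⟩ := sandwich hg hv hk
    have h1 : UP c g u⁻¹ k (-mu) := by
      rw [UP_iff_LOW_inv hu.1.inv_right, inv_inv, neg_neg]
      exact hlu
    have h2 : UP c g v⁻¹ k (-mv) := by
      rw [UP_iff_LOW_inv hv.1.inv_right, inv_inv, neg_neg]
      exact hlv
    have h3 : UP c g (u * v) k ((mu + 3) + (mv + 3)) := UP_mul hg hu.1 hv.1 hk huu huv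
    have h4 : UP c g (u⁻¹ * v⁻¹) k (-mu + -mv) :=
      UP_mul hg hu.1.inv_right hv.1.inv_right hk h1 h2
    have h5 := UP_mul hg (hu.1.inv_right.mul_right hv.1.inv_right) (hu.1.mul_right hv.1) hk h4 h3
    have e : -mu + -mv + ((mu + 3) + (mv + 3)) = 6 := by ring
    rwa [e] at h5
  -- conclude w ∈ DS
  by_contra hcon
  have : ∃ n : ℤ, ¬ c.lt (w ^ n) g := by
    by_contra hcon2
    push_neg at hcon2
    exact hcon ⟨hcomw, hcon2⟩
  obtain ⟨n, hn⟩ := this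
  rw [Cone.not_lt_iff_le] at hn
  have hn0 : n ≠ 0 := by
    rintro rfl
    simp only [zpow_zero] at hn
    rcases hn with h | h
    · exact Cone.lt_irrefl 1 (h ▸ hg)
    · exact Cone.lt_asymm hg h
  -- WLOG via V := w or w⁻¹
  have key : ∀ V : G, Commute g V → (∀ k : ℕ, 0 < k → UP c g V k 6) →
      ∀ N : ℕ, 0 < N → c.le g (V ^ N) → False := by
    intro V hVc hVup N hN hgeV
    have h2 : c.le (g * g) (V ^ N * V ^ N) := Cone.le_mul_le hgeV hgeV
    rw [← pow_add] at h2
    have hlow1 : LOW c g V (N + N) 1 := by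
      intro d hd
      have hd1 : c.lt (g ^ (1:ℤ) * d) (g * g) := by
        rw [zpow_one]
        exact Cone.lt_mul_left (DS_lt_g hd) g
      exact Cone.lt_of_lt_of_le hd1 h2
    have hlow7 : LOW c g V ((N + N) * 7) 7 := by
      have := LOW_raise hg hVc hlow1 (j := 7) (by omega)
      simpa using this
    have hup6 : UP c g V ((N + N) * 7) 6 := hVup _ (by positivity)
    have ha := LOW_one_lt hlow7 hg
    have hb := hup6 1 (one_mem_DS hg)
    rw [mul_one] at hb
    have := (zpow_lt_iff hg).1 (Cone.lt_trans ha hb)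
    omega
  rcases Int.lt_or_lt_of_ne hn0 with hneg | hpos
  · -- n < 0 : use V := w⁻¹
    have hVup : ∀ k : ℕ, 0 < k → UP c g w⁻¹ k 6 := by
      intro k hk
      rw [UP_iff_LOW_inv hcomw.inv_right, inv_inv]
      have := hLOW k hk
      simpa using this
    have hge : c.le g (w⁻¹ ^ (-n).toNat) := by
      have e : w⁻¹ ^ (-n).toNat = w ^ n := by
        rw [inv_pow, ← zpow_natCast w, ← zpow_neg]
        congr 1
        omega
      rw [e]
      exact hn
    exact key w⁻¹ hcomw.inv_right hVup (-n).toNat (by omega) hge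
  · -- n > 0
    have hge : c.le g (w ^ n.toNat) := by
      have e : w ^ n.toNat = w ^ n := by
        rw [← zpow_natCast w]
        congr 1
        omega
      rw [e]
      exact hn
    exact key w hcomw (fun k hk => hUP k hk) n.toNat (by omega) hge

/-- T is closed under conjugation by bounded elements. -/
lemma TS_conj_mem (hg : c.lt 1 g) {b t : G} (hb : b ∈ BS c g) (ht : t ∈ TS c g) :
    b * t * b⁻¹ ∈ TS c g := by
  have hcomm : t⁻¹ * (b⁻¹)⁻¹ * (t * b⁻¹) ∈ DS c g :=
    comm_mem_DS hg (TS_subset_BS ht) (BS_inv_mem hg hb)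
  rw [inv_inv] at hcomm
  have e : b * t * b⁻¹ = t * (t⁻¹ * b * (t * b⁻¹)) := by group
  rw [e]
  exact TS_mul_mem hg ht (DS_subset_TS hg hcomm)

end LOWUP2

section Zorn

variable {c : Cone G} {g : G}

lemma BS_pow_mem (hg : c.lt 1 g) {x : G} (hx : x ∈ BS c g) (n : ℕ) : x ^ n ∈ BS c g := by
  induction n with
  | zero => simpa using one_mem_BS hg
  | succ m ih => rw [pow_succ]; exact BS_mul_mem hg ih hx

/-- commutator swap: `u * v = v * u * t` with `t` infinitesimal. -/
lemma swap_comm (hg : c.lt 1 g) {u v : G} (hu : u ∈ BS c g) (hv : v ∈ BS c g) :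
    ∃ t ∈ TS c g, u * v = v * u * t := by
  refine ⟨u⁻¹ * v⁻¹ * (u * v), DS_subset_TS hg (comm_mem_DS hg hu hv), by group⟩

lemma t_swap (hg : c.lt 1 g) {t b : G} (ht : t ∈ TS c g) (hb : b ∈ BS c g) :
    ∃ t' ∈ TS c g, t * b = b * t' := by
  refine ⟨b⁻¹ * t * (b⁻¹)⁻¹, TS_conj_mem hg (BS_inv_mem hg hb) ht, by group⟩

/-- the family for Zorn's lemma. -/
def FF (c : Cone G) (g : G) : Set (Set G) :=
  {S | S ⊆ BS c g ∧ (∀ a ∈ S, ∀ b ∈ S, a * b ∈ S) ∧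
    (∀ a ∈ S, ∀ t ∈ TS c g, a * t ∈ S) ∧ (∀ a ∈ S, ∀ t ∈ TS c g, t * a ∈ S) ∧
    S ∩ TS c g = ∅}

lemma S_pow_mem {S : Set G} (hS : S ∈ FF c g) {x : G} (hx : x ∈ S) :
    ∀ n : ℕ, 0 < n → x ^ n ∈ S := by
  intro n
  induction n with
  | zero => omega
  | succ m ih =>
    intro _
    rcases Nat.eq_zero_or_pos m with rfl | hm
    · simpa using hx
    · rw [pow_succ]; exact hS.2.1 _ (ih hm) _ hx

lemma exists_maximal_FF : ∃ S₀, S₀ ∈ FF c g ∧ ∀ S ∈ FF c g, S₀ ⊆ S → S = S₀ := by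
  have hzorn := zorn_subset (FF c g) ?_
  · obtain ⟨m, hm⟩ := hzorn
    exact ⟨m, hm.1, fun S hS hsub => (Set.Subset.antisymm (hm.2 hS hsub) hsub)⟩
  · intro ch hch hchain
    refine ⟨⋃₀ ch, ⟨?_, ?_, ?_, ?_, ?_⟩, fun s hs => Set.subset_sUnion_of_mem hs⟩
    · rintro x ⟨S, hS, hx⟩
      exact (hch hS).1 hx
    · rintro x ⟨S, hS, hx⟩ y ⟨S', hS', hy⟩
      rcases hchain.total hS hS' with h | h
      · exact ⟨S', hS', (hch hS').2.1 _ (h hx) _ hy⟩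
      · exact ⟨S, hS, (hch hS).2.1 _ hx _ (h hy)⟩
    · rintro x ⟨S, hS, hx⟩ t ht
      exact ⟨S, hS, (hch hS).2.2.1 _ hx _ ht⟩
    · rintro x ⟨S, hS, hx⟩ t ht
      exact ⟨S, hS, (hch hS).2.2.2.1 _ hx _ ht⟩
    · rw [Set.eq_empty_iff_forall_notMem]
      rintro x ⟨⟨S, hS, hx⟩, hxT⟩
      have := (hch hS).2.2.2.2
      rw [Set.eq_empty_iff_forall_notMem] at this
      exact this x ⟨hx, hxT⟩

/-- extension: if `a ∈ B \ T` cannot be added to a maximal `S₀`, then some positive power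
of `a⁻¹` lies in `S₀`. -/
lemma zorn_ext (hg : c.lt 1 g) {S₀ : Set G} (hS : S₀ ∈ FF c g)
    (hmax : ∀ S ∈ FF c g, S₀ ⊆ S → S = S₀) {a : G} (haB : a ∈ BS c g) (haT : a ∉ TS c g)
    (ha : a ∉ S₀) : ∃ n : ℕ, 0 < n ∧ a⁻¹ ^ n ∈ S₀ := by
  classical
  set S₁ : Set G := {x | ∃ s ∈ S₀ ∪ {1}, ∃ n : ℕ, ∃ t ∈ TS c g,
    (s ∈ S₀ ∨ 0 < n) ∧ x = s * a ^ n * t} with hS₁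
  have hSM_BS : ∀ s ∈ S₀ ∪ {(1:G)}, s ∈ BS c g := by
    rintro s (hs | hs)
    · exact hS.1 hs
    · rw [Set.mem_singleton_iff] at hs
      rw [hs]
      exact one_mem_BS hg
  have hsub : S₀ ⊆ S₁ := by
    intro s hs
    exact ⟨s, Or.inl hs, 0, 1, one_mem_TS hg, Or.inl hs, by simp⟩
  have haS₁ : a ∈ S₁ :=
    ⟨1, Or.inr rfl, 1, 1, one_mem_TS hg, Or.inr one_pos, by simp⟩
  -- S₁ satisfies all axioms of FF except possibly disjointness from TS
  have hBS₁ : S₁ ⊆ BS c g := by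
    rintro x ⟨s, hs, n, t, ht, _, rfl⟩
    exact BS_mul_mem hg (BS_mul_mem hg (hSM_BS s hs) (BS_pow_mem hg haB n))
      (TS_subset_BS ht)
  have hmul₁ : ∀ x ∈ S₁, ∀ y ∈ S₁, x * y ∈ S₁ := by
    rintro x ⟨s, hs, n, t, ht, hc1, rfl⟩ y ⟨s', hs', n', t', ht', hc2, rfl⟩
    have hs'B : s' ∈ BS c g := hSM_BS s' hs'
    -- swaps
    set t₁ := s'⁻¹ * t * s' with ht₁def
    have ht₁ : t₁ ∈ TS c g := by
      have := TS_conj_mem hg (BS_inv_mem hg hs'B) ht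
      simpa [ht₁def] using this
    set cc := (a ^ n)⁻¹ * s'⁻¹ * (a ^ n * s') with hccdef
    have hcc : cc ∈ TS c g := DS_subset_TS hg (by
      have := comm_mem_DS hg (BS_pow_mem hg haB n) hs'B
      simpa [hccdef, mul_assoc] using this)
    set t₂ := (a ^ n')⁻¹ * (cc * t₁) * a ^ n' with ht₂def
    have ht₂ : t₂ ∈ TS c g := by
      have := TS_conj_mem hg (BS_inv_mem hg (BS_pow_mem hg haB n'))
        (TS_mul_mem hg hcc ht₁)
      simpa [ht₂def] using this
    refine ⟨s * s', ?_, n + n', t₂ * t', TS_mul_mem hg ht₂ ht', ?_, ?_⟩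
    · rcases hs with hs | hs
      · rcases hs' with hs' | hs'
        · exact Or.inl (hS.2.1 _ hs _ hs')
        · rw [Set.mem_singleton_iff] at hs'
          rw [hs', mul_one]; exact Or.inl hs
      · rw [Set.mem_singleton_iff] at hs
        rw [hs, one_mul]; exact hs'
    · rcases hc1 with hc1 | hc1
      · rcases hs' with hs' | hs'
        · exact Or.inl (hS.2.1 _ hc1 _ hs')
        · rw [Set.mem_singleton_iff] at hs'
          rw [hs', mul_one]; exact Or.inl hc1
      · exact Or.inr (by omega)
    · -- the group identity
      rw [pow_add, ht₂def, hccdef, ht₁def]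
      group
  have habs₁ : ∀ x ∈ S₁, ∀ u ∈ TS c g, x * u ∈ S₁ := by
    rintro x ⟨s, hs, n, t, ht, hc1, rfl⟩ u hu
    exact ⟨s, hs, n, t * u, TS_mul_mem hg ht hu, hc1, by group⟩
  have habs₁' : ∀ x ∈ S₁, ∀ u ∈ TS c g, u * x ∈ S₁ := by
    rintro x ⟨s, hs, n, t, ht, hc1, rfl⟩ u hu
    have hsB : s ∈ BS c g := hSM_BS s hs
    set u₁ := s⁻¹ * u * s with hu₁def
    have hu₁ : u₁ ∈ TS c g := by
      have := TS_conj_mem hg (BS_inv_mem hg hsB) hu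
      simpa [hu₁def] using this
    set u₂ := (a ^ n)⁻¹ * u₁ * a ^ n with hu₂def
    have hu₂ : u₂ ∈ TS c g := by
      have := TS_conj_mem hg (BS_inv_mem hg (BS_pow_mem hg haB n)) hu₁
      simpa [hu₂def] using this
    refine ⟨s, hs, n, u₂ * t, TS_mul_mem hg hu₂ ht, hc1, ?_⟩
    rw [hu₂def, hu₁def]
    group
  -- S₁ is not disjoint from TS (else contradict maximality)
  have hnd : ¬ (S₁ ∩ TS c g = ∅) := by
    intro hdisj
    have hS₁FF : S₁ ∈ FF c g := ⟨hBS₁, hmul₁, habs₁, habs₁', hdisj⟩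
    have := hmax S₁ hS₁FF hsub
    rw [this] at haS₁
    exact ha haS₁
  rw [Set.eq_empty_iff_forall_notMem] at hnd
  push_neg at hnd
  obtain ⟨x, ⟨s, hs, n, t, ht, hc1, rfl⟩, hxT⟩ := hnd
  -- from s * a^n * t ∈ TS derive a power of a⁻¹ in S₀
  have hsan : s * a ^ n ∈ TS c g := by
    have : s * a ^ n = (s * a ^ n * t) * t⁻¹ := by group
    rw [this]
    exact TS_mul_mem hg hxT (TS_inv_mem hg ht)
  rcases hs with hs | hs
  · -- s ∈ S₀ : then n > 0 (else s ∈ TS contra) and a⁻ⁿ = (s*a^n)⁻¹ * s ... 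
    have hn : 0 < n := by
      rcases Nat.eq_zero_or_pos n with rfl | hn
      · exfalso
        have hdisj := hS.2.2.2.2
        rw [Set.eq_empty_iff_forall_notMem] at hdisj
        exact hdisj s ⟨hs, by simpa using hsan⟩
      · exact hn
    refine ⟨n, hn, ?_⟩
    have e : a⁻¹ ^ n = (s * a ^ n)⁻¹ * s := by
      rw [inv_pow]; group
    rw [e]
    exact hS.2.2.2.1 _ hs _ (TS_inv_mem hg hsan)
  · -- s = 1 : a ^ n ∈ TS with n > 0, contradiction with a ∉ TS
    exfalso
    rw [Set.mem_singleton_iff] at hs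
    subst hs
    rw [one_mul] at hsan
    have hn : 0 < n := by
      rcases hc1 with hc1 | hc1
      · exact absurd hc1 (by
          intro hmem
          have hdisj := hS.2.2.2.2
          rw [Set.eq_empty_iff_forall_notMem] at hdisj
          exact hdisj 1 ⟨hmem, one_mem_TS hg⟩)
      · exact hc1
    exact haT (TS_isolated hn haB hsan)

/-- the Zorn part: a "positive side" for the complement of `T` in `B`. -/
lemma exists_QA (hg : c.lt 1 g) : ∃ Q : Set G,
    Q ⊆ BS c g ∧ (∀ a ∈ Q, ∀ b ∈ Q, a * b ∈ Q) ∧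
    (∀ a ∈ Q, ∀ t ∈ TS c g, a * t ∈ Q) ∧ (∀ a ∈ Q, ∀ t ∈ TS c g, t * a ∈ Q) ∧
    Q ∩ TS c g = ∅ ∧ (∀ x, x ∈ BS c g → x ∉ TS c g → x ∈ Q ∨ x⁻¹ ∈ Q) := by
  obtain ⟨S₀, hS₀, hmax⟩ := exists_maximal_FF (c := c) (g := g)
  refine ⟨S₀, hS₀.1, hS₀.2.1, hS₀.2.2.1, hS₀.2.2.2.1, hS₀.2.2.2.2, ?_⟩
  intro x hxB hxT
  by_contra hcon
  push_neg at hcon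
  obtain ⟨hx1, hx2⟩ := hcon
  obtain ⟨n, hn, hns⟩ := zorn_ext hg hS₀ hmax hxB hxT hx1
  have hxinvB : x⁻¹ ∈ BS c g := BS_inv_mem hg hxB
  have hxinvT : x⁻¹ ∉ TS c g := by
    intro h
    exact hxT (by simpa using TS_inv_mem hg h)
  obtain ⟨n', hn', hns'⟩ := zorn_ext hg hS₀ hmax hxinvB hxinvT hx2
  rw [inv_inv] at hns'
  have h1 : (x⁻¹ ^ n) ^ n' ∈ S₀ := S_pow_mem hS₀ hns n' hn'
  have h2 : (x ^ n') ^ n ∈ S₀ := S_pow_mem hS₀ hns' n hn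
  have h3 : ((x⁻¹ ^ n) ^ n') * ((x ^ n') ^ n) ∈ S₀ := hS₀.2.1 _ h1 _ h2
  have e : ((x⁻¹ ^ n) ^ n') * ((x ^ n') ^ n) = 1 := by
    rw [← pow_mul, ← pow_mul, inv_pow, mul_comm n n']
    group
  rw [e] at h3
  have hdisj := hS₀.2.2.2.2
  rw [Set.eq_empty_iff_forall_notMem] at hdisj
  exact hdisj 1 ⟨h3, one_mem_TS hg⟩

end Zorn

section Assemble

variable {c : Cone G} {g : G}

/-- the inner cone on `T`. -/
def PTs (c : Cone G) (g : G) : Set G := QFZ c g ∪ (Isolator g ∩ c.P)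

lemma PTs_subset_TS (hg : c.lt 1 g) {x : G} (hx : x ∈ PTs c g) : x ∈ TS c g := by
  rcases hx with hx | hx
  · exact QFZ_subset_TS hx
  · exact isolator_subset_TS hg hx.1

lemma PTs_mul (hg : c.lt 1 g) {x y : G} (hx : x ∈ PTs c g) (hy : y ∈ PTs c g) :
    x * y ∈ PTs c g := by
  rcases hx with hx | hx <;> rcases hy with hy | hy
  · exact Or.inl (QFZ_mul_QFZ hg hx hy)
  · exact Or.inl (QFZ_mul_isolator hg hx hy.1)
  · exact Or.inl (isolator_mul_QFZ hg hx.1 hy)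
  · exact Or.inr ⟨isolator_mul_mem c hx.1 hy.1, c.mul_mem _ hx.2 _ hy.2⟩

lemma PTs_tricho (hg : c.lt 1 g) {x : G} (hxT : x ∈ TS c g) (hx1 : x ≠ 1) :
    x ∈ PTs c g ∨ x⁻¹ ∈ PTs c g := by
  by_cases hH : x ∈ Isolator g
  · rcases c.total x with h | h | h
    · exact Or.inl (Or.inr ⟨hH, h⟩)
    · exact Or.inr (Or.inr ⟨isolator_inv_mem hH, h⟩)
    · exact absurd h hx1
  · rcases QFZ_or_inv hg hxT hH with h | h
    · exact Or.inl (Or.inl h)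
    · exact Or.inr (Or.inl h)

lemma PTs_disj (hg : c.lt 1 g) {x : G} (hx : x ∈ PTs c g) : x⁻¹ ∉ PTs c g := by
  rcases hx with hx | hx
  · rintro (h | h)
    · exact QFZ_inv_not hg hx h
    · exact QFZ_not_isolator hx (by simpa using isolator_inv_mem h.1)
  · rintro (h | h)
    · exact QFZ_not_isolator h (isolator_inv_mem hx.1)
    · exact c.inv_not _ hx.2 h.2

lemma one_not_PTs (hg : c.lt 1 g) : (1 : G) ∉ PTs c g := by
  rintro (h | h)
  · exact QFZ_not_isolator h one_mem_isolator
  · exact c.one_not h.2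

lemma PTs_convex (hg : c.lt 1 g) {a b f : G} (ha : a ∈ Isolator g) (hb : b ∈ Isolator g)
    (h1 : a⁻¹ * f ∈ PTs c g) (h2 : f⁻¹ * b ∈ PTs c g) : f ∈ Isolator g := by
  rcases h1 with h1 | h1
  · -- a⁻¹ f is fuzz-positive, then f is fuzz-positive
    have hf : f ∈ QFZ c g := by
      have := isolator_mul_QFZ hg ha h1
      simpa using this
    rcases h2 with h2 | h2
    · -- f⁻¹ b fuzz-positive, then f⁻¹ fuzz-positive : contradiction
      have hfinv : f⁻¹ ∈ QFZ c g := by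
        have := QFZ_mul_isolator hg h2 (isolator_inv_mem hb)
        simpa [mul_assoc] using this
      exact absurd hfinv (QFZ_inv_not hg hf)
    · -- f⁻¹ b ∈ H : then f ∈ H, contradiction with fuzz
      exfalso
      apply QFZ_not_isolator hf
      have : f = b * (f⁻¹ * b)⁻¹ := by group
      rw [this]
      exact isolator_mul_mem c hb (isolator_inv_mem h2.1)
  · -- a⁻¹ f ∈ H : f ∈ H
    have : f = a * (a⁻¹ * f) := by group
    rw [this]
    exact isolator_mul_mem c ha h1.1

/-- unboundedness of positive non-B elements of Z. -/
lemma BS_conv (hg : c.lt 1 g) {x : G} (hxZ : Commute g x) (hxB : x ∉ BS c g)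
    (hx1 : c.lt 1 x) : ∀ m ∈ BS c g, c.lt m x := by
  have hall : ∀ M : ℤ, c.lt (g ^ M) x := by
    intro M
    by_contra h
    rw [Cone.not_lt_iff_le] at h
    apply hxB
    refine ⟨hxZ, (M.natAbs + 1 : ℕ), ?_, ?_⟩
    · refine Cone.lt_of_le_of_lt h (zpow_lt_zpow hg ?_)
      have h1 : M ≤ M.natAbs := Int.le_natAbs
      have h2 : ((M.natAbs + 1 : ℕ) : ℤ) = (M.natAbs : ℤ) + 1 := by push_cast; ring
      omega
    · have h1 : c.lt (g ^ (-((M.natAbs + 1 : ℕ) : ℤ))) (g ^ (0:ℤ)) := by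
        refine zpow_lt_zpow hg ?_
        have : (0:ℤ) ≤ ((M.natAbs : ℕ) : ℤ) := by positivity
        omega
      rw [zpow_zero] at h1
      exact Cone.lt_trans h1 hx1
  intro m hm
  obtain ⟨_, N, hub, _⟩ := hm
  exact Cone.lt_trans hub (hall N)

end Assemble

section Final

lemma conj_eq_of_commute {g f : G} (h : Commute g f) : f * g * f⁻¹ = g := by
  rw [h.symm.eq]
  group

lemma main_cone (c : Cone G) (g : G) (hg : c.lt 1 g) :
    ∃ P : Set G, IsPositiveCone P ∧ IsConvex P (Isolator g) := by
  obtain ⟨Q, hQB, hQmul, hQabsR, hQabsL, hQdisj, hQcov⟩ := exists_QA (c := c) (g := g) hg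
  have hQT : ∀ x, x ∈ Q → x ∈ TS c g → False := by
    intro x h1 h2
    rw [Set.eq_empty_iff_forall_notMem] at hQdisj
    exact hQdisj x ⟨h1, h2⟩
  set PB : Set G := Q ∪ PTs c g with hPBdef
  have hPBsubB : ∀ x ∈ PB, x ∈ BS c g := by
    rintro x (hx | hx)
    · exact hQB hx
    · exact TS_subset_BS (PTs_subset_TS hg hx)
  have hPBmul : ∀ x ∈ PB, ∀ y ∈ PB, x * y ∈ PB := by
    rintro x (hx | hx) y (hy | hy)
    · exact Or.inl (hQmul _ hx _ hy)
    · exact Or.inl (hQabsR _ hx _ (PTs_subset_TS hg hy))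
    · exact Or.inl (hQabsL _ hy _ (PTs_subset_TS hg hx))
    · exact Or.inr (PTs_mul hg hx hy)
  have hPBtricho : ∀ x, x ∈ BS c g → x ≠ 1 → x ∈ PB ∨ x⁻¹ ∈ PB := by
    intro x hxB hx1
    by_cases hxT : x ∈ TS c g
    · rcases PTs_tricho hg hxT hx1 with h | h
      · exact Or.inl (Or.inr h)
      · exact Or.inr (Or.inr h)
    · rcases hQcov x hxB hxT with h | h
      · exact Or.inl (Or.inl h)
      · exact Or.inr (Or.inl h)
  have hPBdisj : ∀ x, x ∈ PB → x⁻¹ ∈ PB → False := by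
    rintro x (hx | hx) (hy | hy)
    · have := hQmul _ hx _ hy
      rw [mul_inv_cancel] at this
      exact hQT 1 this (one_mem_TS hg)
    · exact hQT x hx (by simpa using TS_inv_mem hg (PTs_subset_TS hg hy))
    · exact hQT x⁻¹ hy (TS_inv_mem hg (PTs_subset_TS hg hx))
    · exact PTs_disj hg hx hy
  have hPBone : (1 : G) ∉ PB := by
    rintro (h | h)
    · exact hQT 1 h (one_mem_TS hg)
    · exact one_not_PTs hg h
  have hPBconv : ∀ a b f : G, a ∈ Isolator g → b ∈ Isolator g →
      a⁻¹ * f ∈ PB → f⁻¹ * b ∈ PB → f ∈ Isolator g := by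
    intro a b f ha hb h1 h2
    have hab : a⁻¹ * b ∈ TS c g :=
      isolator_subset_TS hg (isolator_mul_mem c (isolator_inv_mem ha) hb)
    have h1' : a⁻¹ * f ∈ PTs c g := by
      rcases h1 with h1 | h1
      · exfalso
        apply hQT _ h1
        rcases h2 with h2 | h2
        · exfalso
          have hprod := hQmul _ h1 _ h2
          have e : (a⁻¹ * f) * (f⁻¹ * b) = a⁻¹ * b := by group
          rw [e] at hprod
          exact hQT _ hprod hab
        · have e : a⁻¹ * f = (a⁻¹ * b) * (f⁻¹ * b)⁻¹ := by group
          rw [e]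
          exact TS_mul_mem hg hab (TS_inv_mem hg (PTs_subset_TS hg h2))
      · exact h1
    have h2' : f⁻¹ * b ∈ PTs c g := by
      rcases h2 with h2 | h2
      · exfalso
        apply hQT _ h2
        have e : f⁻¹ * b = (a⁻¹ * f)⁻¹ * (a⁻¹ * b) := by group
        rw [e]
        exact TS_mul_mem hg (TS_inv_mem hg (PTs_subset_TS hg h1')) hab
      · exact h2
    exact PTs_convex hg ha hb h1' h2'
  -- next level : glue with the original order outside B
  set PZ : Set G := ((c.P ∩ ZS g) \ BS c g) ∪ PB with hPZdef
  have hPZsubZ : ∀ x ∈ PZ, Commute g x := by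
    rintro x (hx | hx)
    · exact hx.1.2
    · exact (hPBsubB x hx).1
  have houtmul : ∀ x, x ∈ (c.P ∩ ZS g) \ BS c g → ∀ p ∈ BS c g, ¬ c.lt x p := by
    intro x hx p hp hlt
    have h1 : c.lt 1 x := Cone.one_lt_iff.2 hx.1.1
    exact Cone.lt_asymm hlt (BS_conv hg hx.1.2 hx.2 h1 p hp)
  have hPZmul : ∀ x ∈ PZ, ∀ y ∈ PZ, x * y ∈ PZ := by
    rintro x (hx | hx) y (hy | hy)
    · -- both outside
      have hxy : x * y ∉ BS c g := by
        intro hmem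
        have h1 : c.lt 1 y := Cone.one_lt_iff.2 hy.1.1
        have h2 : c.lt x (x * y) := by
          have := Cone.lt_mul_left h1 x
          simpa using this
        exact houtmul x hx _ hmem h2
      exact Or.inl ⟨⟨c.mul_mem _ hx.1.1 _ hy.1.1, hx.1.2.mul_right hy.1.2⟩, hxy⟩
    · -- x outside, y ∈ PB ⊆ BS
      have hyB := hPBsubB y hy
      have hxy : x * y ∉ BS c g := by
        intro hmem
        have e : x = (x * y) * y⁻¹ := by group
        exact hx.2 (e ▸ BS_mul_mem hg hmem (BS_inv_mem hg hyB))
      have hxyP : x * y ∈ c.P := by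
        rcases c.total (x * y) with h | h | h
        · exact h
        · exfalso
          have h0 : c.lt (x * y) 1 := Cone.lt_one_iff.2 h
          have h2 := Cone.lt_mul_right h0 y⁻¹
          have h3 : c.lt x y⁻¹ := by
            have e1 : (x * y) * y⁻¹ = x := by group
            rw [e1, one_mul] at h2
            exact h2
          exact houtmul x hx _ (BS_inv_mem hg hyB) h3
        · exfalso
          have : x = y⁻¹ := mul_eq_one_iff_eq_inv.1 h
          rw [this] at hx
          exact hx.2 (BS_inv_mem hg hyB)
      exact Or.inl ⟨⟨hxyP, hx.1.2.mul_right hyB.1⟩, hxy⟩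
    · -- x ∈ PB, y outside
      have hxB := hPBsubB x hx
      have hxy : x * y ∉ BS c g := by
        intro hmem
        have e : y = x⁻¹ * (x * y) := by group
        exact hy.2 (e ▸ BS_mul_mem hg (BS_inv_mem hg hxB) hmem)
      have hxyP : x * y ∈ c.P := by
        rcases c.total (x * y) with h | h | h
        · exact h
        · exfalso
          have h2 := Cone.lt_mul_left (Cone.lt_one_iff.2 h) x⁻¹
          have h3 : c.lt y x⁻¹ := by
            have e1 : x⁻¹ * (x * y) = y := by group
            rw [e1, mul_one] at h2
            exact h2
          exact houtmul y hy _ (BS_inv_mem hg hxB) h3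
        · exfalso
          have : y = x⁻¹ := (mul_eq_one_iff_inv_eq.1 h).symm
          rw [this] at hy
          exact hy.2 (BS_inv_mem hg hxB)
      exact Or.inl ⟨⟨hxyP, hxB.1.mul_right hy.1.2⟩, hxy⟩
    · exact Or.inr (hPBmul _ hx _ hy)
  have hPZtricho : ∀ x, Commute g x → x ≠ 1 → x ∈ PZ ∨ x⁻¹ ∈ PZ := by
    intro x hxZ hx1
    by_cases hxB : x ∈ BS c g
    · rcases hPBtricho x hxB hx1 with h | h
      · exact Or.inl (Or.inr h)
      · exact Or.inr (Or.inr h)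
    · rcases c.total x with h | h | h
      · exact Or.inl (Or.inl ⟨⟨h, hxZ⟩, hxB⟩)
      · refine Or.inr (Or.inl ⟨⟨h, hxZ.inv_right⟩, ?_⟩)
        intro hmem
        exact hxB (by simpa using BS_inv_mem hg hmem)
      · exact absurd h hx1
  have hPZdisj : ∀ x, x ∈ PZ → x⁻¹ ∈ PZ → False := by
    rintro x (hx | hx) (hy | hy)
    · exact c.inv_not _ hx.1.1 hy.1.1
    · exact hx.2 (by simpa using BS_inv_mem hg (hPBsubB _ hy))
    · exact hy.2 (BS_inv_mem hg (hPBsubB _ hx))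
    · exact hPBdisj x hx hy
  have hPZone : (1 : G) ∉ PZ := by
    rintro (h | h)
    · exact c.one_not h.1.1
    · exact hPBone h
  have hPZconv : ∀ a b f : G, a ∈ Isolator g → b ∈ Isolator g →
      a⁻¹ * f ∈ PZ → f⁻¹ * b ∈ PZ → f ∈ Isolator g := by
    intro a b f ha hb h1 h2
    have hab : a⁻¹ * b ∈ BS c g :=
      isolator_subset_BS hg (isolator_mul_mem c (isolator_inv_mem ha) hb)
    have h1' : a⁻¹ * f ∈ PB := by
      rcases h1 with h1 | h1
      · exfalso
        rcases h2 with h2 | h2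
        · -- both outside : a ≺ f and f ≺ b with f unbounded, contradiction
          have hlt1 : c.lt (a⁻¹ * b) (a⁻¹ * f) :=
            BS_conv hg h1.1.2 h1.2 (Cone.one_lt_iff.2 h1.1.1) _ hab
          have hlt2 : c.lt b f := by
            have := Cone.lt_mul_left hlt1 a
            simpa [mul_assoc] using this
          have hlt3 : c.lt f b := by
            have h3 : c.lt 1 (f⁻¹ * b) := Cone.one_lt_iff.2 h2.1.1
            have := Cone.lt_mul_left h3 f
            simpa [mul_assoc] using this
          exact Cone.lt_asymm hlt2 hlt3
        · -- a⁻¹f outside B but equals (a⁻¹b)(f⁻¹b)⁻¹ ∈ B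
          apply h1.2
          have e : a⁻¹ * f = (a⁻¹ * b) * (f⁻¹ * b)⁻¹ := by group
          rw [e]
          exact BS_mul_mem hg hab (BS_inv_mem hg (hPBsubB _ h2))
      · exact h1
    have h2' : f⁻¹ * b ∈ PB := by
      rcases h2 with h2 | h2
      · exfalso
        apply h2.2
        have e : f⁻¹ * b = (a⁻¹ * f)⁻¹ * (a⁻¹ * b) := by group
        rw [e]
        exact BS_mul_mem hg (BS_inv_mem hg (hPBsubB _ h1')) hab
      · exact h2
    exact hPBconv a b f ha hb h1' h2'
  -- final level : the centralizer glue
  set PF : Set G := {f | c.lt g (f * g * f⁻¹)} ∪ PZ with hPFdef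
  have hPZnotconj : ∀ x ∈ PZ, ¬ c.lt g (x * g * x⁻¹) := by
    intro x hx hcon
    rw [conj_eq_of_commute (hPZsubZ x hx)] at hcon
    exact Cone.lt_irrefl _ hcon
  refine ⟨PF, ⟨?_, ?_, ?_, ?_⟩, ?_⟩
  · -- multiplicativity
    rintro x (hx | hx) y (hy | hy)
    · left
      have h1 : c.lt (x * g * x⁻¹) (x * (y * g * y⁻¹) * x⁻¹) := by
        have := Cone.lt_conj hy x
        simpa [mul_assoc] using this
      have h2 := Cone.lt_trans hx h1
      have e : x * (y * g * y⁻¹) * x⁻¹ = (x * y) * g * (x * y)⁻¹ := by group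
      rwa [e] at h2
    · left
      have e : (x * y) * g * (x * y)⁻¹ = x * (y * g * y⁻¹) * x⁻¹ := by group
      show c.lt g ((x * y) * g * (x * y)⁻¹)
      rw [e, conj_eq_of_commute (hPZsubZ y hy)]
      exact hx
    · left
      show c.lt g ((x * y) * g * (x * y)⁻¹)
      have e : (x * y) * g * (x * y)⁻¹ = x * (y * g * y⁻¹) * x⁻¹ := by group
      rw [e]
      have h1 : c.lt (x * g * x⁻¹) (x * (y * g * y⁻¹) * x⁻¹) := by
        have := Cone.lt_conj hy x
        simpa [mul_assoc] using this
      rw [conj_eq_of_commute (hPZsubZ x hx)] at h1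
      exact h1
    · exact Or.inr (hPZmul x hx y hy)
  · -- trichotomy
    intro x
    by_cases hx1 : x = 1
    · exact Or.inr (Or.inr hx1)
    by_cases hxZ : Commute g x
    · rcases hPZtricho x hxZ hx1 with h | h
      · exact Or.inl (Or.inr h)
      · exact Or.inr (Or.inl (Or.inr h))
    · have hne : x * g * x⁻¹ ≠ g := by
        intro he
        apply hxZ
        have h3 : g * x = x * g := by
          have h4 := congrArg (· * x) he
          calc g * x = x * g * x⁻¹ * x := by rw [he]
          _ = x * g := by group
        exact h3
      rcases Cone.lt_total (c := c) (Ne.symm hne) with h | h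
      · exact Or.inl (Or.inl h)
      · right; left; left
        show c.lt g (x⁻¹ * g * x⁻¹⁻¹)
        have h2 := Cone.lt_conj h x⁻¹
        have e : x⁻¹ * (x * g * x⁻¹) * x⁻¹⁻¹ = g := by group
        rw [e] at h2
        exact h2
  · -- inverse not both
    rintro x (hx | hx) (hy | hy)
    · -- both conj-positive
      have hy' : c.lt g (x⁻¹ * g * x⁻¹⁻¹) := hy
      have h2 := Cone.lt_conj hy' x
      have e : x * (x⁻¹ * g * x⁻¹⁻¹) * x⁻¹ = g := by group
      rw [e] at h2
      have e2 : x * g * x⁻¹ = x * g * x⁻¹ := rfl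
      exact Cone.lt_asymm hx h2
    · -- x conj-positive, x⁻¹ ∈ PZ
      have hcz' : Commute g x := by
        have := (hPZsubZ _ hy).inv_right
        rwa [inv_inv] at this
      have hx' : c.lt g (x * g * x⁻¹) := hx
      rw [conj_eq_of_commute hcz'] at hx'
      exact Cone.lt_irrefl _ hx' 
    · -- x ∈ PZ, x⁻¹ conj-positive
      have hy' : c.lt g (x⁻¹ * g * x⁻¹⁻¹) := hy
      rw [conj_eq_of_commute ((hPZsubZ _ hx).inv_right)] at hy'
      exact Cone.lt_irrefl _ hy'
    · exact hPZdisj x hx hy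
  · -- 1 not in
    rintro (h | h)
    · have h' : c.lt g (1 * g * 1⁻¹) := h
      simp only [one_mul, inv_one, mul_one] at h'
      exact Cone.lt_irrefl _ h'
    · exact hPZone h
  · -- convexity
    intro a ha b hb f h1 h2
    have haZ : Commute g a := commute_g_of_mem_isolator c ha
    have hbZ : Commute g b := commute_g_of_mem_isolator c hb
    have h1' : a⁻¹ * f ∈ PZ := by
      rcases h1 with h1 | h1
      · exfalso
        have h1c : c.lt g ((a⁻¹ * f) * g * (a⁻¹ * f)⁻¹) := h1
        have e1 : (a⁻¹ * f) * g * (a⁻¹ * f)⁻¹ = a⁻¹ * (f * g * f⁻¹) * a := by group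
        rw [e1] at h1c
        have h1d := Cone.lt_conj h1c a
        have e2 : a * (a⁻¹ * (f * g * f⁻¹) * a) * a⁻¹ = f * g * f⁻¹ := by group
        rw [e2, conj_eq_of_commute haZ] at h1d
        -- h1d : c.lt (a * g * a⁻¹) (f * g * f⁻¹), and a * g * a⁻¹ = g
        rcases h2 with h2 | h2
        · have h2c : c.lt g ((f⁻¹ * b) * g * (f⁻¹ * b)⁻¹) := h2
          have e3 : (f⁻¹ * b) * g * (f⁻¹ * b)⁻¹ = f⁻¹ * (b * g * b⁻¹) * f := by group
          rw [e3, conj_eq_of_commute hbZ] at h2c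
          have h2d := Cone.lt_conj h2c f
          have e4 : f * (f⁻¹ * g * f) * f⁻¹ = g := by group
          rw [e4] at h2d
          exact Cone.lt_asymm h1d h2d
        · have hczf : Commute g f := by
            have hfb : Commute g (f⁻¹ * b) := hPZsubZ _ h2
            have h5 : Commute g ((f⁻¹ * b) * b⁻¹) := hfb.mul_right hbZ.inv_right
            have e5 : (f⁻¹ * b) * b⁻¹ = f⁻¹ := by group
            have h6 : Commute g f⁻¹ := e5 ▸ h5
            have h7 := h6.inv_right
            rwa [inv_inv] at h7
          rw [conj_eq_of_commute hczf] at h1d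
          exact Cone.lt_irrefl _ h1d
      · exact h1
    have h2' : f⁻¹ * b ∈ PZ := by
      rcases h2 with h2 | h2
      · exfalso
        have hczf : Commute g f := by
          have haf : Commute g (a⁻¹ * f) := hPZsubZ _ h1'
          have h5 : Commute g (a * (a⁻¹ * f)) := haZ.mul_right haf
          have e5 : a * (a⁻¹ * f) = f := by group
          exact e5 ▸ h5
        have h2c : c.lt g ((f⁻¹ * b) * g * (f⁻¹ * b)⁻¹) := h2
        have e3 : (f⁻¹ * b) * g * (f⁻¹ * b)⁻¹ = f⁻¹ * (b * g * b⁻¹) * f := by group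
        rw [e3, conj_eq_of_commute hbZ] at h2c
        have e4 : f⁻¹ * g * f = g := by
          have := conj_eq_of_commute hczf.inv_right
          rwa [inv_inv] at this
        rw [e4] at h2c
        exact Cone.lt_irrefl _ h2c
      · exact h2
    exact hPZconv a b f ha hb h1' h2'

end Final



/-- the isolator as a subgroup. -/
def isolatorSubgroup (c : Cone G) (g : G) : Subgroup G where
  carrier := Isolator g
  one_mem' := one_mem_isolator
  mul_mem' := fun {a b} ha hb => isolator_mul_mem c ha hb
  inv_mem' := fun {a} ha => isolator_inv_mem ha

end IsoConv

/-- In a bi-orderable group, the isolator `I(g)` of a nonidentity element `g`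
is a relatively convex subgroup. -/
theorem isolator_relatively_convex {G : Type*} [Group G]
    (hbo : IsBiOrderable G) (g : G) (hg : g ≠ 1) :
    ∃ P : Set G, IsPositiveCone P ∧
      (∃ H : Subgroup G, (H : Set G) = Isolator g) ∧ IsConvex P (Isolator g) := by
  obtain ⟨P₀, hPC, hconj⟩ := hbo
  obtain ⟨hmul, htot, hinv, hone⟩ := hPC
  let c : IsoConv.Cone G := ⟨P₀, hmul, htot, hinv, hone, fun x p hp => hconj x p hp⟩
  have hsub : ∃ H : Subgroup G, (H : Set G) = Isolator g :=
    ⟨IsoConv.isolatorSubgroup c g, rfl⟩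
  rcases htot g with hP | hP | hP
  · have hg1 : c.lt 1 g := by simpa [IsoConv.Cone.lt] using hP
    obtain ⟨P, h1, h2⟩ := IsoConv.main_cone c g hg1
    exact ⟨P, h1, hsub, h2⟩
  · have hg1 : c.lt 1 g⁻¹ := by simpa [IsoConv.Cone.lt] using hP
    obtain ⟨P, h1, h2⟩ := IsoConv.main_cone c g⁻¹ hg1
    rw [IsoConv.isolator_inv_eq] at h2
    exact ⟨P, h1, hsub, h2⟩
  · exact absurd hP hg
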